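/- arXiv:1802.05175 — 6 statements merged into one kernel-verified Lean document; each statement's English description precedes it below -/
import Mathlib

section
/- Let N ≥ 1 and let S be a symmetric N×N real matrix with nonnegative entries. Suppose (ρ_x)_{x=1}^N are compactly supported symmetric Borel probability measures on ℝ whose Stieltjes transforms m_x(z) = ∫ (τ − z)⁻¹ ρ_x(dτ) satisfy −1/m_x(z) = z + ∑_{y=1}^N S_{xy} m_y(z) for every x and every z in the complex upper half-plane, and let ρ := N⁻¹ ∑_{x=1}^N ρ_x. Then sSup(supp ρ) ≤ 2‖S‖^{1/2}. -/
open MeasureTheory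

/-- The topological support of a measure on `ℝ`: the set of points all of whose
neighbourhoods have positive measure. -/
def measSupport (μ : Measure ℝ) : Set ℝ :=
  {x : ℝ | ∀ U ∈ nhds x, μ U ≠ 0}

/-- The matrix norm induced by the maximum norm on `ℝ^N`: the maximum absolute row sum. -/
noncomputable def maxRowNorm {N : ℕ} (M : Matrix (Fin N) (Fin N) ℝ) : ℝ :=
  ⨆ x, ∑ y, |M x y|

section Aux

lemma res_ne (z : ℂ) (hz : 0 < z.im) (τ : ℝ) : (τ:ℂ) - z ≠ 0 := by
  intro h
  have : ((τ:ℂ) - z).im = 0 := by rw [h]; rfl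
  simp at this; linarith

lemma res_norm_le (z : ℂ) (hz : 0 < z.im) (τ : ℝ) :
    ‖((τ:ℂ) - z)⁻¹‖ ≤ (z.im)⁻¹ := by
  rw [norm_inv]
  apply inv_anti₀ hz
  calc z.im = |((τ:ℂ) - z).im| := by simp [abs_of_pos hz]
  _ ≤ ‖(τ:ℂ) - z‖ := Complex.abs_im_le_norm _
  _ = ‖(τ:ℂ) - z‖ := rfl

lemma res_integrable (μ : Measure ℝ) [IsProbabilityMeasure μ] (z : ℂ) (hz : 0 < z.im) :
    Integrable (fun τ : ℝ => ((τ:ℂ) - z)⁻¹) μ := by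
  have hc : Continuous (fun τ : ℝ => ((τ:ℂ) - z)⁻¹) :=
    (Complex.continuous_ofReal.sub continuous_const).inv₀ (res_ne z hz)
  exact (integrable_const ((z.im)⁻¹)).mono' hc.aestronglyMeasurable
    (Filter.Eventually.of_forall (res_norm_le z hz))

lemma normSq_sub_mk (E η τ : ℝ) :
    Complex.normSq ((τ:ℂ) - ((E:ℂ) + η*Complex.I)) = (τ-E)^2 + η^2 := by
  rw [Complex.normSq_apply]
  simp
  ring

lemma res_im (z : ℂ) (τ : ℝ) :
    (((τ:ℂ) - z)⁻¹).im = z.im / Complex.normSq ((τ:ℂ) - z) := by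
  rw [Complex.inv_im]
  simp [neg_div]

lemma stieltjes_im (μ : Measure ℝ) [IsProbabilityMeasure μ] (z : ℂ) (hz : 0 < z.im) :
    (∫ τ, ((τ:ℂ) - z)⁻¹ ∂μ).im = ∫ τ, z.im / Complex.normSq ((τ:ℂ) - z) ∂μ := by
  rw [← RCLike.im_eq_complex_im, ← integral_im (res_integrable μ z hz)]
  refine integral_congr_ae (Filter.Eventually.of_forall fun τ => ?_)
  simp only [RCLike.im_eq_complex_im]
  exact res_im z τ

lemma stieltjes_im_nonneg (μ : Measure ℝ) [IsProbabilityMeasure μ] (z : ℂ) (hz : 0 < z.im) :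
    0 ≤ (∫ τ, ((τ:ℂ) - z)⁻¹ ∂μ).im := by
  rw [stieltjes_im μ z hz]
  exact integral_nonneg fun τ => div_nonneg hz.le (Complex.normSq_nonneg _)

lemma stieltjes_abs_le (μ : Measure ℝ) [IsProbabilityMeasure μ] (z : ℂ) (hz : 0 < z.im) :
    ‖∫ τ, ((τ:ℂ) - z)⁻¹ ∂μ‖ ≤ (z.im)⁻¹ := by
  calc ‖∫ τ, ((τ:ℂ) - z)⁻¹ ∂μ‖ = ‖∫ τ, ((τ:ℂ) - z)⁻¹ ∂μ‖ := rfl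
  _ ≤ ∫ τ, ‖((τ:ℂ) - z)⁻¹‖ ∂μ := norm_integral_le_integral_norm _
  _ ≤ ∫ τ, (z.im)⁻¹ ∂μ := by
      refine integral_mono ((res_integrable μ z hz).norm) (integrable_const _) ?_
      exact fun τ => res_norm_le z hz τ
  _ = (z.im)⁻¹ := by simp

lemma stieltjes_diff (μ : Measure ℝ) [IsProbabilityMeasure μ] (z z' : ℂ)
    (hz : 0 < z.im) (hz' : 0 < z'.im) :
    ‖(∫ τ, ((τ:ℂ) - z)⁻¹ ∂μ) - ∫ τ, ((τ:ℂ) - z')⁻¹ ∂μ‖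
      ≤ ‖z - z'‖ * ((z.im)⁻¹ * (z'.im)⁻¹) := by
  rw [← integral_sub (res_integrable μ z hz) (res_integrable μ z' hz')]
  calc ‖∫ τ, (((τ:ℂ) - z)⁻¹ - ((τ:ℂ) - z')⁻¹) ∂μ‖
      = ‖∫ τ, (((τ:ℂ) - z)⁻¹ - ((τ:ℂ) - z')⁻¹) ∂μ‖ := rfl
  _ ≤ ∫ _τ, ‖z - z'‖ * ((z.im)⁻¹ * (z'.im)⁻¹) ∂μ := by
      apply norm_integral_le_of_norm_le (integrable_const _)
      refine Filter.Eventually.of_forall fun τ => ?_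
      have h1 : ((τ:ℂ) - z)⁻¹ - ((τ:ℂ) - z')⁻¹ = (z - z') * (((τ:ℂ) - z)⁻¹ * ((τ:ℂ) - z')⁻¹) := by
        field_simp [res_ne z hz τ, res_ne z' hz' τ]
        ring
      rw [h1]
      calc ‖(z - z') * (((τ:ℂ) - z)⁻¹ * ((τ:ℂ) - z')⁻¹)‖
          = ‖z - z'‖ * (‖((τ:ℂ) - z)⁻¹‖ * ‖((τ:ℂ) - z')⁻¹‖) := by
            rw [norm_mul, norm_mul]
      _ ≤ ‖z - z'‖ * ((z.im)⁻¹ * (z'.im)⁻¹) := by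
            refine mul_le_mul_of_nonneg_left ?_ (norm_nonneg _)
            exact mul_le_mul (res_norm_le z hz τ) (res_norm_le z' hz' τ) (norm_nonneg _) (by positivity)
      _ = ‖z - z'‖ * ((z.im)⁻¹ * (z'.im)⁻¹) := rfl
  _ = ‖z - z'‖ * ((z.im)⁻¹ * (z'.im)⁻¹) := by simp

lemma dichotomy {s E D M : ℝ} (hs : 0 ≤ s) (hM : 0 ≤ M) (hD : 0 < D) (hDE : D ≤ E)
    (hD2 : D^2 = E^2 - 4*s) (hquad : 0 ≤ s*M^2 - E*M + 1) :
    M ≤ 2/(E+D) ∨ E + D ≤ 2*s*M := by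
  rcases le_or_gt (E+D) (2*s*M) with h | h
  · exact Or.inr h
  left
  rw [le_div_iff₀ (by linarith)]
  have hsq : D^2 ≤ (2*s*M - E)^2 := by nlinarith
  have h2 : 2*s*M - E ≤ -D := by nlinarith [sq_nonneg (2*s*M - E + D)]
  nlinarith [mul_le_mul_of_nonneg_right h2 hM]

lemma vbound {E D η V : ℝ} (hD : 0 < D) (hDE : D ≤ E) (hη : 0 < η) (hV : 0 ≤ V)
    (h : V ≤ (2/(E+D))^2 * (η + ((E^2-D^2)/4) * V)) :
    V ≤ 2*η/(D*(E+D)) := by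
  have hED : 0 < E + D := by linarith
  rw [le_div_iff₀ (by positivity)]
  have hne : (E+D)^2 ≠ 0 := by positivity
  have h'' : V * (E+D)^2 ≤ 4 * (η + ((E^2-D^2)/4) * V) := by
    calc V * (E+D)^2 ≤ ((2/(E+D))^2 * (η + ((E^2-D^2)/4) * V)) * (E+D)^2 :=
          mul_le_mul_of_nonneg_right h (by positivity)
    _ = 4 * (η + ((E^2-D^2)/4) * V) := by field_simp; ring
  nlinarith

end Aux

set_option maxHeartbeats 1000000 in
/-- The trivial bound: the self-consistent density of states of a Wigner-type model with
variance matrix `S` is supported in `[-2‖S‖^{1/2}, 2‖S‖^{1/2}]`. -/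
theorem sSup_support_le_trivial_bound (N : ℕ) (hN : 1 ≤ N)
    (S : Matrix (Fin N) (Fin N) ℝ) (hsymS : S.IsSymm) (hSnn : ∀ x y, 0 ≤ S x y)
    (ρ : Fin N → Measure ℝ) [∀ x, IsProbabilityMeasure (ρ x)]
    (hcomp : ∀ x, IsCompact (measSupport (ρ x)))
    (hsymm : ∀ x, (ρ x).map (fun τ => -τ) = ρ x)
    (m : Fin N → ℂ → ℂ)
    (hm : ∀ x (z : ℂ), m x z = ∫ τ, ((τ : ℂ) - z)⁻¹ ∂(ρ x))
    (hQVE : ∀ x (z : ℂ), 0 < z.im →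
      -(m x z)⁻¹ = z + ∑ y, (S x y : ℂ) * m y z)
    (ρtot : Measure ℝ) (hρtot : ρtot = (N : ENNReal)⁻¹ • ∑ x, ρ x) :
    sSup (measSupport ρtot) ≤ 2 * maxRowNorm S ^ ((1 : ℝ) / 2) := by
  classical
  have hNE : Nonempty (Fin N) := Fin.pos_iff_nonempty.mp hN
  have hne : (Finset.univ : Finset (Fin N)).Nonempty := Finset.univ_nonempty
  set s : ℝ := maxRowNorm S with hs_def
  -- row sums are bounded by s, and s ≥ 0
  have hrow : ∀ x, ∑ y, S x y ≤ s := by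
    intro x
    have h1 : ∑ y, |S x y| = ∑ y, S x y :=
      Finset.sum_congr rfl fun y _ => abs_of_nonneg (hSnn x y)
    rw [← h1, hs_def]
    exact le_ciSup (f := fun x => ∑ y, |S x y|) (Set.Finite.bddAbove (Set.finite_range _)) x
  have hs0 : 0 ≤ s :=
    le_trans (Finset.sum_nonneg fun y _ => hSnn _ y) (hrow (Classical.arbitrary _))
  -- notation for points in the upper half plane
  set Z : ℝ → ℝ → ℂ := fun E η => (E:ℂ) + η * Complex.I with hZ_def
  have zim : ∀ E η, (Z E η).im = η := by intro E η; simp [hZ_def]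
  have zre : ∀ E η, (Z E η).re = E := by intro E η; simp [hZ_def]
  -- basic properties of m
  have him0 : ∀ (x) (z : ℂ), 0 < z.im → 0 ≤ (m x z).im := by
    intro x z hz; rw [hm]; exact stieltjes_im_nonneg (ρ x) z hz
  have habs : ∀ (x) (z : ℂ), 0 < z.im → ‖m x z‖ ≤ (z.im)⁻¹ := by
    intro x z hz; rw [hm]; exact stieltjes_abs_le (ρ x) z hz
  have hsum_im : ∀ (x) (z : ℂ), (∑ y, (S x y : ℂ) * m y z).im = ∑ y, S x y * (m y z).im := by
    intro x z
    rw [Complex.im_sum]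
    exact Finset.sum_congr rfl fun y _ => by simp [Complex.mul_im]
  have hmne : ∀ (x) (z : ℂ), 0 < z.im → m x z ≠ 0 := by
    intro x z hz h0
    have h := hQVE x z hz
    rw [h0] at h
    simp only [inv_zero, neg_zero] at h
    have him : (0:ℂ).im = (z + ∑ y, (S x y : ℂ) * m y z).im := by rw [h]
    rw [Complex.add_im, hsum_im] at him
    have hsnn : 0 ≤ ∑ y, S x y * (m y z).im :=
      Finset.sum_nonneg fun y _ => mul_nonneg (hSnn x y) (him0 y z hz)
    simp only [Complex.zero_im] at him
    linarith
  -- the max of |m x z| over x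
  set Mf : ℝ → ℝ → ℝ := fun E η => Finset.univ.sup' hne (fun x => ‖m x (Z E η)‖)
    with hMf_def
  have hMfle : ∀ E η x, ‖m x (Z E η)‖ ≤ Mf E η :=
    fun E η x => Finset.le_sup' (fun x => ‖m x (Z E η)‖) (Finset.mem_univ x)
  have hMf0 : ∀ E η, 0 ≤ Mf E η := fun E η =>
    le_trans (norm_nonneg _) (hMfle E η (Classical.arbitrary _))
  -- the quadratic inequality for the max
  have hquadM : ∀ E η, 0 ≤ E → 0 < η → 0 ≤ s * (Mf E η)^2 - E * (Mf E η) + 1 := by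
    intro E η hE hη
    set z := Z E η with hz_def
    have hz : 0 < z.im := by rw [hz_def, zim]; exact hη
    have hMfeq : Mf E η = Finset.univ.sup' hne (fun x => ‖m x z‖) := rfl
    obtain ⟨x₀, -, hx₀⟩ := Finset.exists_mem_eq_sup' hne (fun x => ‖m x z‖)
    have hx₀' : Mf E η = ‖m x₀ z‖ := by rw [hMfeq, hx₀]
    have hm0 := hmne x₀ z hz
    set w : ℂ := ∑ y, (S x₀ y : ℂ) * m y z with hw_def
    have h1 : ‖m x₀ z‖ * ‖z + w‖ = 1 := by
      rw [← norm_mul]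
      have : m x₀ z * (z + w) = -1 := by
        rw [← hQVE x₀ z hz]
        field_simp
      rw [this]
      simp
    have hwle : ‖w‖ ≤ s * Mf E η := by
      calc ‖w‖ ≤ ∑ y, ‖(S x₀ y : ℂ) * m y z‖ :=
            norm_sum_le Finset.univ (fun y => (S x₀ y : ℂ) * m y z)
      _ = ∑ y, S x₀ y * ‖m y z‖ := by
            refine Finset.sum_congr rfl fun y _ => ?_
            rw [norm_mul, Complex.norm_real, Real.norm_of_nonneg (hSnn x₀ y)]
      _ ≤ ∑ y, S x₀ y * Mf E η := by
            refine Finset.sum_le_sum fun y _ => ?_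
            exact mul_le_mul_of_nonneg_left (hMfle E η y) (hSnn x₀ y)
      _ = (∑ y, S x₀ y) * Mf E η := by rw [← Finset.sum_mul]
      _ ≤ s * Mf E η := mul_le_mul_of_nonneg_right (hrow x₀) (hMf0 E η)
    have hzabs : E ≤ ‖z‖ := by
      calc E = |z.re| := by rw [zre]; exact (abs_of_nonneg hE).symm
      _ ≤ ‖z‖ := Complex.abs_re_le_norm z
    have htri : ‖z‖ - ‖w‖ ≤ ‖z + w‖ := by
      have h : ‖z‖ ≤ ‖z + w‖ + ‖w‖ := by
        have := norm_sub_le (z + w) w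
        rwa [add_sub_cancel_right] at this
      linarith
    have h2 : E - s * Mf E η ≤ ‖z + w‖ := by
      have := hwle; have := hzabs; linarith
    have h3 : Mf E η * (E - s * Mf E η) ≤ 1 := by
      calc Mf E η * (E - s * Mf E η) = ‖m x₀ z‖ * (E - s * Mf E η) := by
            rw [← hx₀']
      _ ≤ ‖m x₀ z‖ * ‖z + w‖ :=
            mul_le_mul_of_nonneg_left h2 (norm_nonneg _)
      _ = 1 := h1
    nlinarith [hMf0 E η]
    -- C1: bound on the max of |m| for E beyond the spectral edge
  have hC1 : ∀ E η, 2 * Real.sqrt s < E → 0 < η →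
      Mf E η ≤ 2 / (E + Real.sqrt (E^2 - 4*s)) := by
    intro E η hE hη
    have hE0 : 0 < E := lt_of_le_of_lt (by positivity) hE
    have h4s : 4 * s < E^2 := by nlinarith [Real.sq_sqrt hs0, Real.sqrt_nonneg s]
    set D := Real.sqrt (E^2 - 4*s) with hD_def
    have hD2 : D^2 = E^2 - 4*s := Real.sq_sqrt (by linarith)
    have hD0 : 0 < D := Real.sqrt_pos.mpr (by linarith)
    have hDE : D ≤ E := by
      rw [hD_def]
      calc Real.sqrt (E^2-4*s) ≤ Real.sqrt (E^2) := Real.sqrt_le_sqrt (by linarith)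
      _ = E := Real.sqrt_sq hE0.le
    have hED : 0 < E + D := by linarith
    have hdich : ∀ t, 0 < t → Mf E t ≤ 2/(E+D) ∨ E + D ≤ 2*s*(Mf E t) := fun t ht =>
      dichotomy hs0 (hMf0 E t) hD0 hDE hD2 (hquadM E t hE0.le ht)
    rcases hdich η hη with h | h
    · exact h
    exfalso
    have hspos : 0 < s := by
      rcases hs0.lt_or_eq with h' | h'
      · exact h'
      · exfalso; rw [← h'] at h; simp at h; linarith
    set T := max η (E+D) with hT_def
    have hηT : η ≤ T := le_max_left _ _
    have hEDT : E + D ≤ T := le_max_right _ _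
    have hT0 : 0 < T := lt_of_lt_of_le hη hηT
    have hMT : Mf E T < 2/(E+D) := by
      have h1 : Mf E T ≤ T⁻¹ := by
        refine Finset.sup'_le hne _ fun x _ => ?_
        have := habs x (Z E T) (by rw [zim]; exact hT0)
        rwa [zim] at this
      have h2 : T⁻¹ ≤ (E+D)⁻¹ := inv_anti₀ hED hEDT
      have h3 : (E+D)⁻¹ < 2/(E+D) := by
        rw [div_eq_mul_inv]
        have := inv_pos.mpr hED
        linarith
      linarith
    have hMη : (E+D)/(2*s) ≤ Mf E η := by
      rw [div_le_iff₀ (by positivity)]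
      nlinarith
    have hgap : 2/(E+D) < (E+D)/(2*s) := by
      rw [div_lt_div_iff₀ hED (by positivity)]
      nlinarith
    set mid := (2/(E+D) + (E+D)/(2*s))/2 with hmid_def
    have hmid1 : 2/(E+D) < mid := by rw [hmid_def]; linarith
    have hmid2 : mid < (E+D)/(2*s) := by rw [hmid_def]; linarith
    have hcont : ContinuousOn (fun t => Mf E t) (Set.Icc η T) := by
      have hK : 0 ≤ η⁻¹ * η⁻¹ := by positivity
      show ContinuousOn
        (fun t => Finset.univ.sup' hne ((fun x t => ‖m x (Z E t)‖) · t)) (Set.Icc η T)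
      apply ContinuousOn.finset_sup'_apply hne
      intro x _
      apply LipschitzOnWith.continuousOn (K := (η⁻¹*η⁻¹).toNNReal)
      apply LipschitzOnWith.of_dist_le_mul
      intro t ht t' ht'
      have ht0 : 0 < t := lt_of_lt_of_le hη ht.1
      have ht0' : 0 < t' := lt_of_lt_of_le hη ht'.1
      have hzt : (0:ℝ) < (Z E t).im := by rw [zim]; exact ht0
      have hzt' : (0:ℝ) < (Z E t').im := by rw [zim]; exact ht0'
      have hd : ‖m x (Z E t) - m x (Z E t')‖
          ≤ ‖Z E t - Z E t'‖ * (t⁻¹ * t'⁻¹) := by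
        rw [hm x (Z E t), hm x (Z E t')]
        have := stieltjes_diff (ρ x) (Z E t) (Z E t') hzt hzt'
        rwa [zim, zim] at this
      have hZsub : Z E t - Z E t' = ((t:ℂ) - (t':ℂ)) * Complex.I := by
        rw [hZ_def]; ring
      have hZd : ‖Z E t - Z E t'‖ = dist t t' := by
        rw [hZsub, norm_mul, Complex.norm_I, mul_one, ← Complex.ofReal_sub,
          Complex.norm_real, Real.norm_eq_abs, Real.dist_eq]
      calc dist (‖m x (Z E t)‖) (‖m x (Z E t')‖)
          = |‖m x (Z E t)‖ - ‖m x (Z E t')‖| := Real.dist_eq _ _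
      _ ≤ ‖m x (Z E t) - m x (Z E t')‖ :=
            abs_norm_sub_norm_le _ _
      _ ≤ ‖Z E t - Z E t'‖ * (t⁻¹ * t'⁻¹) := hd
      _ = (t⁻¹ * t'⁻¹) * dist t t' := by rw [hZd]; ring
      _ ≤ (η⁻¹*η⁻¹) * dist t t' := by
            have h1 : t⁻¹ ≤ η⁻¹ := inv_anti₀ hη ht.1
            have h2 : t'⁻¹ ≤ η⁻¹ := inv_anti₀ hη ht'.1
            exact mul_le_mul_of_nonneg_right
              (mul_le_mul h1 h2 (by positivity) (by positivity)) dist_nonneg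
      _ = ↑((η⁻¹*η⁻¹).toNNReal) * dist t t' := by rw [Real.coe_toNNReal _ hK]
    have hmem : mid ∈ Set.Icc ((fun t => Mf E t) T) ((fun t => Mf E t) η) := by
      constructor
      · show Mf E T ≤ mid; linarith
      · show mid ≤ Mf E η; linarith
    obtain ⟨t₁, ht₁, hMt₁⟩ := intermediate_value_Icc' hηT hcont hmem
    have hMt₁' : Mf E t₁ = mid := hMt₁
    have ht₁0 : 0 < t₁ := lt_of_lt_of_le hη ht₁.1
    rcases hdich t₁ ht₁0 with h' | h'
    · rw [hMt₁'] at h'; linarith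
    · rw [hMt₁'] at h'
      rw [lt_div_iff₀ (by positivity)] at hmid2
      nlinarith
    -- C2: linear bound on the imaginary part beyond the spectral edge
  have hC2 : ∀ E η, 2 * Real.sqrt s < E → 0 < η → ∀ x,
      (m x (Z E η)).im ≤ 2*η / (Real.sqrt (E^2-4*s) * (E + Real.sqrt (E^2-4*s))) := by
    intro E η hE hη x
    have hE0 : 0 < E := lt_of_le_of_lt (by positivity) hE
    have h4s : 4 * s < E^2 := by nlinarith [Real.sq_sqrt hs0, Real.sqrt_nonneg s]
    set D := Real.sqrt (E^2 - 4*s) with hD_def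
    have hD2 : D^2 = E^2 - 4*s := Real.sq_sqrt (by linarith)
    have hD0 : 0 < D := Real.sqrt_pos.mpr (by linarith)
    have hDE : D ≤ E := by
      rw [hD_def]
      calc Real.sqrt (E^2-4*s) ≤ Real.sqrt (E^2) := Real.sqrt_le_sqrt (by linarith)
      _ = E := Real.sqrt_sq hE0.le
    have hED : 0 < E + D := by linarith
    set z := Z E η with hz_def
    have hz : 0 < z.im := by rw [hz_def, zim]; exact hη
    set V : ℝ := Finset.univ.sup' hne (fun x => (m x z).im) with hV_def
    have hVle : ∀ x, (m x z).im ≤ V := fun x =>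
      Finset.le_sup' (fun x => (m x z).im) (Finset.mem_univ x)
    have hV0 : 0 ≤ V := le_trans (him0 _ z hz) (hVle (Classical.arbitrary _))
    have hrec : ∀ x, (m x z).im
        = Complex.normSq (m x z) * (η + ∑ y, S x y * (m y z).im) := by
      intro x
      have h := congrArg Complex.im (hQVE x z hz)
      rw [Complex.neg_im, Complex.inv_im, Complex.add_im, hsum_im] at h
      have h' : (m x z).im / Complex.normSq (m x z)
          = η + ∑ y, S x y * (m y z).im := by
        rw [neg_div, neg_neg] at h
        rw [h, hz_def, zim]
      rw [div_eq_iff (Complex.normSq_pos.mpr (hmne x z hz)).ne'] at h'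
      rw [h']; ring
    have hsumle : ∀ x, ∑ y, S x y * (m y z).im ≤ s * V := by
      intro x
      calc ∑ y, S x y * (m y z).im ≤ ∑ y, S x y * V := by
            refine Finset.sum_le_sum fun y _ => ?_
            exact mul_le_mul_of_nonneg_left (hVle y) (hSnn x y)
      _ = (∑ y, S x y) * V := by rw [← Finset.sum_mul]
      _ ≤ s * V := mul_le_mul_of_nonneg_right (hrow x) hV0
    have hsum0 : ∀ x, 0 ≤ ∑ y, S x y * (m y z).im := fun x =>
      Finset.sum_nonneg fun y _ => mul_nonneg (hSnn x y) (him0 y z hz)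
    have hnsq : ∀ x, Complex.normSq (m x z) ≤ (2/(E+D))^2 := by
      intro x
      rw [← Complex.sq_norm]
      have h1 : ‖m x z‖ ≤ 2/(E+D) := le_trans (hMfle E η x) (hC1 E η hE hη)
      exact pow_le_pow_left₀ (norm_nonneg _) h1 2
    have hVrec : V ≤ (2/(E+D))^2 * (η + ((E^2-D^2)/4) * V) := by
      have hs4 : (E^2 - D^2)/4 = s := by rw [hD2]; ring
      rw [hs4]
      obtain ⟨x₁, -, hx₁⟩ := Finset.exists_mem_eq_sup' hne (fun x => (m x z).im)
      have hVx : V = (m x₁ z).im := by rw [hV_def, hx₁]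
      calc V = (m x₁ z).im := hVx
      _ = Complex.normSq (m x₁ z) * (η + ∑ y, S x₁ y * (m y z).im) := hrec x₁
      _ ≤ (2/(E+D))^2 * (η + s * V) := by
            refine mul_le_mul (hnsq x₁) (by linarith [hsumle x₁]) (by linarith [hsum0 x₁])
              (by positivity)
    have hVb : V ≤ 2*η/(D*(E+D)) := vbound hD0 hDE hη hV0 hVrec
    exact le_trans (hVle x) hVb
    -- C3: measure of small intervals is controlled by the imaginary part
  have hC3 : ∀ E η (x : Fin N), 0 < η →
      ((ρ x) (Set.Ioo (E-η) (E+η))).toReal ≤ 2*η * (m x (Z E η)).im := by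
    intro E η x hη
    set z := Z E η with hz_def
    have hz : 0 < z.im := by rw [hz_def, zim]; exact hη
    have hint : Integrable (fun τ : ℝ => η / Complex.normSq ((τ:ℂ) - z)) (ρ x) := by
      have h1 := (res_integrable (ρ x) z hz).im
      refine h1.congr (Filter.Eventually.of_forall fun τ => ?_)
      simp only [RCLike.im_eq_complex_im]
      exact (res_im z τ).trans (by rw [hz_def, zim])
    have h1 : (m x z).im = ∫ τ, η / Complex.normSq ((τ:ℂ) - z) ∂(ρ x) := by
      rw [hm, stieltjes_im (ρ x) z hz]
      congr 1
      ext τ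
      rw [hz_def, zim]
    have h2 : (1/(2*η)) * ((ρ x) (Set.Ioo (E-η) (E+η))).toReal
        ≤ ∫ τ in Set.Ioo (E-η) (E+η), η / Complex.normSq ((τ:ℂ) - z) ∂(ρ x) := by
      refine le_trans (le_of_eq ?_) (setIntegral_ge_of_const_le (c := 1/(2*η)) measurableSet_Ioo (measure_ne_top _ _) ?_
        hint.integrableOn)
      · rw [smul_eq_mul, mul_comm]; rfl
      intro τ hτ
      have hnsq : Complex.normSq ((τ:ℂ) - z) = (τ - E)^2 + η^2 := by
        simp only [hz_def, hZ_def]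
        exact normSq_sub_mk E η τ
      rw [hnsq]
      have h3 : (τ - E)^2 ≤ η^2 := by
        have := hτ.1; have := hτ.2
        nlinarith
      have hpos : (0:ℝ) < (τ-E)^2 + η^2 := by positivity
      rw [div_le_div_iff₀ (by positivity) hpos]
      nlinarith
    have h3 : ∫ τ in Set.Ioo (E-η) (E+η), η / Complex.normSq ((τ:ℂ) - z) ∂(ρ x)
        ≤ ∫ τ, η / Complex.normSq ((τ:ℂ) - z) ∂(ρ x) := by
      refine setIntegral_le_integral hint (Filter.Eventually.of_forall fun τ => ?_)
      exact div_nonneg hη.le (Complex.normSq_nonneg _)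
    have h4 : (1/(2*η)) * ((ρ x) (Set.Ioo (E-η) (E+η))).toReal ≤ (m x z).im := by
      rw [h1]; linarith
    have h5 := mul_le_mul_of_nonneg_left h4 (by positivity : (0:ℝ) ≤ 2*η)
    calc ((ρ x) (Set.Ioo (E-η) (E+η))).toReal
        = 2*η * ((1/(2*η)) * ((ρ x) (Set.Ioo (E-η) (E+η))).toReal) := by
          field_simp
    _ ≤ 2*η * (m x z).im := h5
    -- main claim: every support point is at most 2 sqrt s
  have hmain : ∀ E ∈ measSupport ρtot, E ≤ 2 * Real.sqrt s := by
    intro E hEsupp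
    by_contra hgt
    push_neg at hgt
    set ε := (E - 2*Real.sqrt s)/2 with hε_def
    have hε : 0 < ε := by rw [hε_def]; linarith
    have hEε : 2*Real.sqrt s < E - ε := by rw [hε_def]; linarith
    have hEε0 : 0 < E - ε := lt_of_le_of_lt (by positivity) hEε
    set D₀ := Real.sqrt ((E-ε)^2 - 4*s) with hD₀_def
    have h4s : 4*s < (E-ε)^2 := by nlinarith [Real.sq_sqrt hs0, Real.sqrt_nonneg s]
    have hD₀2 : D₀^2 = (E-ε)^2 - 4*s := Real.sq_sqrt (by linarith)
    have hD₀0 : 0 < D₀ := Real.sqrt_pos.mpr (by linarith)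
    set K := 2/(D₀*(E-ε)) with hK_def
    have hK0 : 0 ≤ K := by positivity
    have hKb : ∀ E', E' ∈ Set.Icc (E-ε) (E+ε) → ∀ η, 0 < η → ∀ x,
        ((ρ x) (Set.Ioo (E'-η) (E'+η))).toReal ≤ 2*K*η^2 := by
      intro E' hE' η hη x
      have hE'1 : E - ε ≤ E' := hE'.1
      have hE'gt : 2*Real.sqrt s < E' := lt_of_lt_of_le hEε hE'1
      have hE'0 : 0 < E' := lt_of_lt_of_le hEε0 hE'1
      set D' := Real.sqrt (E'^2 - 4*s) with hD'_def
      have h4s' : 4*s < E'^2 := by nlinarith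
      have hD'2 : D'^2 = E'^2-4*s := Real.sq_sqrt (by linarith)
      have hD'0 : 0 < D' := Real.sqrt_pos.mpr (by linarith)
      have hD₀D' : D₀ ≤ D' := by
        rw [hD₀_def, hD'_def]
        exact Real.sqrt_le_sqrt (by nlinarith)
      have him := hC2 E' η hE'gt hη x
      have hmono : 2*η/(D'*(E'+D')) ≤ K*η := by
        rw [hK_def, div_mul_eq_mul_div, div_le_div_iff₀ (by positivity) (by positivity)]
        have h1 : D₀*(E-ε) ≤ D'*(E'+D') :=
          mul_le_mul hD₀D' (by linarith) hEε0.le hD'0.le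
        have := mul_le_mul_of_nonneg_left h1 (by positivity : (0:ℝ) ≤ 2*η)
        linarith
      calc ((ρ x) (Set.Ioo (E'-η) (E'+η))).toReal ≤ 2*η * (m x (Z E' η)).im :=
            hC3 E' η x hη
      _ ≤ 2*η * (K*η) :=
            mul_le_mul_of_nonneg_left (le_trans him hmono) (by positivity)
      _ = 2*K*η^2 := by ring
    have hzero : ∀ x, (ρ x) (Set.Ioo (E-ε) (E+ε)) = 0 := by
      intro x
      by_contra hne0
      have hpos : 0 < ((ρ x) (Set.Ioo (E-ε) (E+ε))).toReal :=
        ENNReal.toReal_pos hne0 (measure_ne_top _ _)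
      have hcov : ∀ n : ℕ, 0 < n →
          ((ρ x) (Set.Ioo (E-ε) (E+ε))).toReal ≤ 8*K*ε^2/n := by
        intro n hn
        have hν : (0:ℝ) < n := Nat.cast_pos.mpr hn
        set c : ℕ → ℝ := fun j => E - ε + (2*(j:ℝ)+1)*ε/n with hc_def
        have hsub : Set.Ioo (E-ε) (E+ε) ⊆
            ⋃ j ∈ Finset.range n, Set.Ioo (c j - 2*ε/n) (c j + 2*ε/n) := by
          intro t ht
          set u := t - (E-ε) with hu_def
          have hu0 : 0 < u := by rw [hu_def]; linarith [ht.1]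
          have hu2 : u < 2*ε := by rw [hu_def]; linarith [ht.2]
          set j := ⌊u*n/(2*ε)⌋₊ with hj_def
          have hjn : j < n := by
            rw [hj_def, Nat.floor_lt (by positivity), div_lt_iff₀ (by positivity)]
            nlinarith
          have hj1 : (j:ℝ)*(2*ε) ≤ u*n := by
            have h := Nat.floor_le (R := ℝ) (show 0 ≤ u*n/(2*ε) by positivity)
            rw [← hj_def] at h
            exact (le_div_iff₀ (by positivity)).mp h
          have hj2 : u*n < ((j:ℝ)+1)*(2*ε) := by
            have h := Nat.lt_floor_add_one (u*(n:ℝ)/(2*ε))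
            rw [← hj_def] at h
            exact (div_lt_iff₀ (by positivity)).mp h
          refine Set.mem_iUnion₂.mpr ⟨j, Finset.mem_range.mpr hjn, ?_⟩
          constructor
          · have g1 : (2*(j:ℝ)+1)*ε - 2*ε < u*n := by nlinarith
            have g1' : ((2*(j:ℝ)+1)*ε - 2*ε)/n < u := (div_lt_iff₀ hν).mpr g1
            have e1 : c j - 2*ε/(n:ℝ) = (E - ε) + ((2*(j:ℝ)+1)*ε - 2*ε)/n := by
              simp only [hc_def]; ring
            rw [e1, hu_def] at *
            linarith [g1']
          · have g2 : u*n < (2*(j:ℝ)+1)*ε + 2*ε := by nlinarith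
            have g2' : u < ((2*(j:ℝ)+1)*ε + 2*ε)/n := (lt_div_iff₀ hν).mpr g2
            have e2 : c j + 2*ε/(n:ℝ) = (E - ε) + ((2*(j:ℝ)+1)*ε + 2*ε)/n := by
              simp only [hc_def]; ring
            rw [e2, hu_def] at *
            linarith [g2']
        have hb : (ρ x) (Set.Ioo (E-ε) (E+ε)) ≤ ENNReal.ofReal (8*K*ε^2/n) := by
          calc (ρ x) (Set.Ioo (E-ε) (E+ε))
              ≤ (ρ x) (⋃ j ∈ Finset.range n, Set.Ioo (c j - 2*ε/n) (c j + 2*ε/n)) :=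
                measure_mono hsub
          _ ≤ ∑ j ∈ Finset.range n, (ρ x) (Set.Ioo (c j - 2*ε/n) (c j + 2*ε/n)) :=
                measure_biUnion_finset_le _ _
          _ ≤ ∑ _j ∈ Finset.range n, ENNReal.ofReal (2*K*(2*ε/n)^2) := by
                refine Finset.sum_le_sum fun j hj => ?_
                have hjn := Finset.mem_range.mp hj
                have hjn' : ((j:ℝ)+1) ≤ n := by exact_mod_cast hjn
                have hcj : c j ∈ Set.Icc (E-ε) (E+ε) := by
                  simp only [hc_def]
                  constructor
                  · have : 0 ≤ (2*(j:ℝ)+1)*ε/n := by positivity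
                    linarith
                  · have : (2*(j:ℝ)+1)*ε/n ≤ 2*ε := by
                      rw [div_le_iff₀ hν]
                      nlinarith
                    linarith
                have hmeas := hKb (c j) hcj (2*ε/n) (by positivity) x
                rw [← ENNReal.ofReal_toReal
                  (measure_ne_top (ρ x) (Set.Ioo (c j - 2*ε/n) (c j + 2*ε/n)))]
                exact ENNReal.ofReal_le_ofReal hmeas
          _ = (n:ENNReal) * ENNReal.ofReal (2*K*(2*ε/n)^2) := by
                rw [Finset.sum_const, Finset.card_range, nsmul_eq_mul]
          _ = ENNReal.ofReal ((n:ℝ) * (2*K*(2*ε/n)^2)) := by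
                rw [ENNReal.ofReal_mul (by positivity : (0:ℝ) ≤ (n:ℝ)),
                  ENNReal.ofReal_natCast]
          _ = ENNReal.ofReal (8*K*ε^2/n) := by
                congr 1
                field_simp
                ring
        exact ENNReal.toReal_le_of_le_ofReal (by positivity) hb
      obtain ⟨n, hn⟩ := exists_nat_gt (8*K*ε^2 / ((ρ x) (Set.Ioo (E-ε) (E+ε))).toReal)
      have hn0 : 0 < n := by
        rcases Nat.eq_zero_or_pos n with h0 | h0
        · exfalso
          rw [h0] at hn
          have : 0 ≤ 8*K*ε^2 / ((ρ x) (Set.Ioo (E-ε) (E+ε))).toReal := by positivity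
          simp at hn
          linarith
        · exact h0
      have hc1 := hcov n hn0
      rw [div_lt_iff₀ hpos] at hn
      have h2 : 8*K*ε^2/(n:ℝ) < ((ρ x) (Set.Ioo (E-ε) (E+ε))).toReal := by
        rw [div_lt_iff₀ (Nat.cast_pos.mpr hn0)]
        nlinarith
      linarith
    have hU : Set.Ioo (E-ε) (E+ε) ∈ nhds E :=
      isOpen_Ioo.mem_nhds ⟨by linarith, by linarith⟩
    refine hEsupp _ hU ?_
    rw [hρtot]
    simp only [Measure.smul_apply, smul_eq_mul]
    have hsum : (∑ x, ρ x) (Set.Ioo (E-ε) (E+ε)) = 0 := by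
      rw [Measure.finset_sum_apply]
      exact Finset.sum_eq_zero fun x _ => hzero x
    rw [hsum, mul_zero]
  have hfinal : sSup (measSupport ρtot) ≤ 2*Real.sqrt s :=
    Real.sSup_le hmain (by positivity)
  rw [← Real.sqrt_eq_rpow]
  exact hfinal
end

section
/- Let ρ be a compactly supported Borel probability measure on ℝ that is symmetric (invariant under τ ↦ −τ). Then the maximum of its support equals the limit superior of the k-th roots of its moments: sSup(supp ρ) = limsup_{k→∞} (∫ τ^k ρ(dτ))^{1/k}. -/
open MeasureTheory

open Filter Topology in
lemma isOpen_compl_measSupport (μ : Measure ℝ) : IsOpen (measSupport μ)ᶜ := by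
  rw [isOpen_iff_mem_nhds]
  intro x hx
  simp only [Set.mem_compl_iff, measSupport, Set.mem_setOf_eq, not_forall] at hx
  obtain ⟨U, hU, hU0⟩ := hx
  rw [not_ne_iff] at hU0
  obtain ⟨V, hVU, hVopen, hxV⟩ := mem_nhds_iff.mp hU
  filter_upwards [hVopen.mem_nhds hxV] with y hy
  intro hyS
  exact hyS V (hVopen.mem_nhds hy) (measure_mono_null hVU hU0)

lemma measure_compl_measSupport (μ : Measure ℝ) : μ (measSupport μ)ᶜ = 0 := by
  obtain ⟨B, hBc, -, hB⟩ := TopologicalSpace.exists_countable_basis ℝ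
  have hsub : (measSupport μ)ᶜ ⊆ ⋃ b ∈ {b ∈ B | μ b = 0}, b := by
    intro x hx
    simp only [Set.mem_compl_iff, measSupport, Set.mem_setOf_eq, not_forall] at hx
    obtain ⟨U, hU, hU0⟩ := hx
    rw [not_ne_iff] at hU0
    obtain ⟨b, hbB, hxb, hbU⟩ := hB.mem_nhds_iff.mp hU
    exact Set.mem_biUnion ⟨hbB, measure_mono_null hbU hU0⟩ hxb
  refine measure_mono_null hsub ?_
  exact (measure_biUnion_null_iff (hBc.mono (Set.sep_subset _ _))).mpr fun b hb => hb.2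

/-- For a compactly supported symmetric probability measure on `ℝ`, the maximum of the
support equals the limsup of the `k`-th roots of the moments. -/
theorem sSup_support_eq_limsup_moment_roots (ρ : Measure ℝ) [IsProbabilityMeasure ρ]
    (hcomp : IsCompact (measSupport ρ))
    (hsymm : ρ.map (fun τ => -τ) = ρ) :
    sSup (measSupport ρ) =
      Filter.limsup (fun k : ℕ => (∫ τ, τ ^ k ∂ρ) ^ ((k : ℝ)⁻¹)) Filter.atTop := by
  classical
  set S := measSupport ρ with hS
  set M := sSup S with hMdef
  set u : ℕ → ℝ := fun k => (∫ τ, τ ^ k ∂ρ) ^ ((k : ℝ)⁻¹) with hu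
  -- basic facts about S
  have hcompl : ρ Sᶜ = 0 := measure_compl_measSupport ρ
  have hae : ∀ᵐ τ ∂ρ, τ ∈ S := by
    rw [MeasureTheory.ae_iff]
    exact hcompl
  have hne : S.Nonempty := by
    by_contra h
    rw [Set.not_nonempty_iff_eq_empty] at h
    have : ρ Set.univ = 0 := by
      have : (Set.univ : Set ℝ) = Sᶜ := by simp [h]
      rw [this]; exact hcompl
    simp [measure_univ] at this
  have hbdd : BddAbove S := hcomp.bddAbove
  have hMmem : M ∈ S := hcomp.sSup_mem hne
  -- symmetry of the support
  have hsymmS : ∀ x ∈ S, -x ∈ S := by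
    intro x hx U hU
    obtain ⟨V, hVU, hVo, hxV⟩ := mem_nhds_iff.mp hU
    have hVpos : ρ V ≠ 0 := by
      have hmap : ρ V = ρ ((fun τ => -τ) ⁻¹' V) := by
        conv_lhs => rw [← hsymm]
        exact MeasureTheory.Measure.map_apply measurable_neg hVo.measurableSet
      rw [hmap]
      refine hx _ ((hVo.preimage continuous_neg).mem_nhds ?_)
      simpa using hxV
    exact fun h0 => hVpos (measure_mono_null hVU h0)
  have hM0 : 0 ≤ M := by
    obtain ⟨x, hx⟩ := hne
    have h1 := le_csSup hbdd hx
    have h2 := le_csSup hbdd (hsymmS x hx)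
    linarith
  have habs : ∀ᵐ τ ∂ρ, |τ| ≤ M := by
    filter_upwards [hae] with τ hτ
    have h1 := le_csSup hbdd hτ
    have h2 := le_csSup hbdd (hsymmS τ hτ)
    rw [abs_le]; constructor <;> linarith
  -- integrability of the moments
  have hint : ∀ k : ℕ, Integrable (fun τ => τ ^ k) ρ := by
    intro k
    refine (integrable_const (M ^ k)).mono' ((continuous_pow k).aestronglyMeasurable) ?_
    filter_upwards [habs] with τ hτ
    rw [Real.norm_eq_abs, abs_pow]
    exact pow_le_pow_left₀ (abs_nonneg τ) hτ k
  -- nonnegativity of the moments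
  have hmom_nonneg : ∀ k : ℕ, 0 ≤ ∫ τ, τ ^ k ∂ρ := by
    intro k
    have hmap : ∫ τ, τ ^ k ∂ρ = ∫ τ, (-τ) ^ k ∂ρ := by
      conv_lhs => rw [← hsymm]
      rw [integral_map measurable_neg.aemeasurable ((continuous_pow k).aestronglyMeasurable)]
    have hint' : Integrable (fun τ => (-τ) ^ k) ρ := by
      have heq : (fun τ : ℝ => (-τ) ^ k) = fun τ : ℝ => (-1 : ℝ) ^ k * τ ^ k := by
        funext τ; rw [neg_pow]
      rw [heq]; exact (hint k).const_mul _
    have h2 : (2 : ℝ) * ∫ τ, τ ^ k ∂ρ = ∫ τ, (τ ^ k + (-τ) ^ k) ∂ρ := by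
      rw [integral_add (hint k) hint', ← hmap]; ring
    have h3 : 0 ≤ ∫ τ, (τ ^ k + (-τ) ^ k) ∂ρ := by
      refine integral_nonneg fun τ => ?_
      show (0 : ℝ) ≤ τ ^ k + (-τ) ^ k
      rcases Nat.even_or_odd k with hk | hk
      · have h1 : (-τ) ^ k = τ ^ k := hk.neg_pow τ
        have h2 := hk.pow_nonneg τ
        rw [h1]; linarith
      · rw [hk.neg_pow]; simp
    linarith
  -- upper bound on the moments
  have hub : ∀ k : ℕ, ∫ τ, τ ^ k ∂ρ ≤ M ^ k := by
    intro k
    have : ∫ τ, τ ^ k ∂ρ ≤ ∫ _τ, M ^ k ∂ρ := by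
      refine integral_mono_ae (hint k) (integrable_const _) ?_
      filter_upwards [habs] with τ hτ
      calc τ ^ k ≤ |τ ^ k| := le_abs_self _
        _ = |τ| ^ k := abs_pow τ k
        _ ≤ M ^ k := pow_le_pow_left₀ (abs_nonneg τ) hτ k
    simpa using this
  -- boundedness of u
  have hu_nonneg : ∀ k, 0 ≤ u k := fun k => Real.rpow_nonneg (hmom_nonneg k) _
  have hu_le : ∀ᶠ k in Filter.atTop, u k ≤ M := by
    filter_upwards [Filter.eventually_ge_atTop 1] with k hk
    calc u k ≤ (M ^ k) ^ ((k : ℝ)⁻¹) :=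
          Real.rpow_le_rpow (hmom_nonneg k) (hub k) (by positivity)
      _ = M := Real.pow_rpow_inv_natCast hM0 (by omega)
  have hbddle : Filter.IsBoundedUnder (· ≤ ·) Filter.atTop u := ⟨M, Filter.eventually_map.mpr hu_le⟩
  have hbddge : Filter.IsBoundedUnder (· ≥ ·) Filter.atTop u :=
    ⟨0, Filter.eventually_map.mpr (Filter.Eventually.of_forall hu_nonneg)⟩
  refine le_antisymm ?_ (Filter.limsup_le_of_le hbddge.isCoboundedUnder_le hu_le)
  -- lower bound : M ≤ limsup
  have hlimsup_nonneg : (0 : ℝ) ≤ Filter.limsup u Filter.atTop :=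
    Filter.le_limsup_of_frequently_le
      (Filter.Eventually.frequently (Filter.Eventually.of_forall hu_nonneg)) hbddle
  refine le_of_forall_lt fun b hb => ?_
  rcases lt_or_ge b 0 with hb0 | hb0
  · exact lt_of_lt_of_le hb0 hlimsup_nonneg
  -- here 0 ≤ b < M
  obtain ⟨b', hbb', hb'M⟩ := exists_between hb
  have hb'0 : 0 ≤ b' := le_trans hb0 hbb'.le
  set I : Set ℝ := Set.Ioo b' (M + 1) with hI
  have hMI : M ∈ I := ⟨hb'M, by linarith⟩
  have hIpos : ρ I ≠ 0 := hMmem I (isOpen_Ioo.mem_nhds hMI)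
  set c : ℝ := (ρ I).toReal with hc
  have hcpos : 0 < c := ENNReal.toReal_pos hIpos (measure_ne_top ρ I)
  -- key moment lower bound
  have key : ∀ j : ℕ, b' ^ (2 * j) * c ≤ ∫ τ, τ ^ (2 * j) ∂ρ := by
    intro j
    have h1 : b' ^ (2 * j) * c ≤ ∫ τ in I, τ ^ (2 * j) ∂ρ := by
      have := setIntegral_ge_of_const_le measurableSet_Ioo (measure_ne_top ρ I)
        (fun τ hτ => pow_le_pow_left₀ hb'0 hτ.1.le (2 * j)) ((hint (2 * j)).integrableOn)
      rw [smul_eq_mul, mul_comm] at this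
      exact this
    refine h1.trans (setIntegral_le_integral (hint _) ?_)
    exact Filter.Eventually.of_forall fun τ => (even_two_mul j).pow_nonneg τ
  -- lower bound on u (2 * j)
  have hlow : ∀ j : ℕ, 1 ≤ j → b' * c ^ (((2 * j : ℕ) : ℝ))⁻¹ ≤ u (2 * j) := by
    intro j hj
    have h2j : (2 * j : ℕ) ≠ 0 := by omega
    have h1 : (b' ^ (2 * j) * c) ^ (((2 * j : ℕ) : ℝ))⁻¹ ≤ u (2 * j) :=
      Real.rpow_le_rpow (by positivity) (key j) (by positivity)
    calc b' * c ^ (((2 * j : ℕ) : ℝ))⁻¹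
        = (b' ^ (2 * j)) ^ (((2 * j : ℕ) : ℝ))⁻¹ * c ^ (((2 * j : ℕ) : ℝ))⁻¹ := by
          rw [Real.pow_rpow_inv_natCast hb'0 h2j]
      _ = (b' ^ (2 * j) * c) ^ (((2 * j : ℕ) : ℝ))⁻¹ :=
          (Real.mul_rpow (by positivity) hcpos.le).symm
      _ ≤ u (2 * j) := h1
  -- the lower bounds tend to b' > b
  have hten : Filter.Tendsto (fun j : ℕ => b' * c ^ (((2 * j : ℕ) : ℝ))⁻¹)
      Filter.atTop (nhds b') := by
    have h1 : Filter.Tendsto (fun j : ℕ => (((2 * j : ℕ) : ℝ))⁻¹) Filter.atTop (nhds 0) := by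
      refine Filter.Tendsto.comp tendsto_inv_atTop_zero ?_
      have h2 : Filter.Tendsto (fun j : ℕ => 2 * j) Filter.atTop Filter.atTop :=
        Filter.tendsto_atTop_atTop.mpr fun b => ⟨b, fun a ha => by omega⟩
      exact tendsto_natCast_atTop_atTop.comp h2
    have h2 : Filter.Tendsto (fun j : ℕ => c ^ (((2 * j : ℕ) : ℝ))⁻¹) Filter.atTop (nhds 1) := by
      have hcont : ContinuousAt (fun x : ℝ => c ^ x) 0 :=
        Real.continuousAt_const_rpow hcpos.ne'
      have := hcont.tendsto.comp h1
      simpa [Function.comp_def] using this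
    have := h2.const_mul b'
    simpa using this
  set m : ℝ := (b + b') / 2 with hm
  have hbm : b < m := by rw [hm]; linarith
  have hmb' : m < b' := by rw [hm]; linarith
  have hev : ∀ᶠ j : ℕ in Filter.atTop, m ≤ u (2 * j) := by
    filter_upwards [Filter.eventually_ge_atTop 1,
      hten.eventually_const_lt hmb'] with j hj hbj
    exact hbj.le.trans (hlow j hj)
  have hfreq : ∃ᶠ k in Filter.atTop, m ≤ u k := by
    have htend2 : Filter.Tendsto (fun j : ℕ => 2 * j) Filter.atTop Filter.atTop :=
      Filter.tendsto_atTop_atTop.mpr fun b => ⟨b, fun a ha => by omega⟩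
    exact htend2.frequently hev.frequently
  exact lt_of_lt_of_le hbm (Filter.le_limsup_of_frequently_le hfreq hbddle)
end

section
/- Let N ≥ 1, let S be an N×N real matrix with nonnegative entries, and let (c_{x,k})_{1≤x≤N, k≥0} be nonnegative reals with c_{x,0} = 1 for all x and satisfying the recursion c_{x,k} = ∑_{y=1}^N S_{xy} ∑_{n=0}^{k−1} c_{x,k−n−1} c_{y,n} for all x and all k ≥ 1. Then c_{x,k} ≤ C_k · ‖S‖^k for every x and k, where C_k is the k-th Catalan number. -/
/-- Nonnegative coefficients satisfying the Catalan-type recursion with weights from a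
nonnegative matrix `S` are bounded by `C_k ‖S‖^k`. -/
theorem moment_recursion_catalan_bound (N : ℕ) (hN : 1 ≤ N)
    (S : Matrix (Fin N) (Fin N) ℝ) (hSnn : ∀ x y, 0 ≤ S x y)
    (c : Fin N → ℕ → ℝ) (hcnn : ∀ x k, 0 ≤ c x k) (hc0 : ∀ x, c x 0 = 1)
    (hrec : ∀ x (k : ℕ), 1 ≤ k →
      c x k = ∑ y, S x y * ∑ n ∈ Finset.range k, c x (k - n - 1) * c y n) :
    ∀ x k, c x k ≤ (catalan k : ℝ) * maxRowNorm S ^ k := by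
  have hbdd : BddAbove (Set.range fun x : Fin N => ∑ y, |S x y|) :=
    Set.Finite.bddAbove (Set.finite_range _)
  have hrow : ∀ x, ∑ y, S x y ≤ maxRowNorm S := by
    intro x
    have h : ∑ y, S x y = ∑ y, |S x y| :=
      Finset.sum_congr rfl fun y _ => (abs_of_nonneg (hSnn x y)).symm
    rw [h]
    exact le_ciSup hbdd x
  have hnn : 0 ≤ maxRowNorm S :=
    le_trans (Finset.sum_nonneg fun y _ => hSnn ⟨0, hN⟩ y) (hrow ⟨0, hN⟩)
  intro x k
  induction k using Nat.strong_induction_on generalizing x with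
  | _ k ih =>
    match k with
    | 0 => simp [hc0 x]
    | Nat.succ m =>
      rw [hrec x (m + 1) (Nat.succ_le_succ (Nat.zero_le m))]
      have hcat : (catalan (m + 1) : ℝ)
          = ∑ n ∈ Finset.range (m + 1), (catalan (m - n) : ℝ) * (catalan n : ℝ) := by
        rw [catalan_succ, Fin.sum_univ_eq_sum_range (fun i => catalan i * catalan (m - i))]
        push_cast
        exact Finset.sum_congr rfl fun n _ => mul_comm _ _
      have key : ∀ y, ∑ n ∈ Finset.range (m + 1), c x (m + 1 - n - 1) * c y n
          ≤ (catalan (m + 1) : ℝ) * maxRowNorm S ^ m := by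
        intro y
        calc ∑ n ∈ Finset.range (m + 1), c x (m + 1 - n - 1) * c y n
            ≤ ∑ n ∈ Finset.range (m + 1),
              (catalan (m - n) : ℝ) * (catalan n : ℝ) * maxRowNorm S ^ m := by
              apply Finset.sum_le_sum
              intro n hn
              have hn' := Finset.mem_range.mp hn
              have h1 : m + 1 - n - 1 = m - n := by omega
              rw [h1]
              have hb1 := ih (m - n) (by omega) x
              have hb2 := ih n (by omega) y
              calc c x (m - n) * c y n
                  ≤ ((catalan (m - n) : ℝ) * maxRowNorm S ^ (m - n))
                    * ((catalan n : ℝ) * maxRowNorm S ^ n) :=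
                    mul_le_mul hb1 hb2 (hcnn y n) (by positivity)
                _ = (catalan (m - n) : ℝ) * (catalan n : ℝ)
                    * (maxRowNorm S ^ (m - n) * maxRowNorm S ^ n) := by ring
                _ = (catalan (m - n) : ℝ) * (catalan n : ℝ) * maxRowNorm S ^ m := by
                    rw [← pow_add, show m - n + n = m by omega]
          _ = (catalan (m + 1) : ℝ) * maxRowNorm S ^ m := by
              rw [← Finset.sum_mul, ← hcat]
      have hstep : ∑ y, S x y * ∑ n ∈ Finset.range (m + 1), c x (m + 1 - n - 1) * c y n
          ≤ ∑ y, S x y * ((catalan (m + 1) : ℝ) * maxRowNorm S ^ m) := by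
        apply Finset.sum_le_sum
        intro y _
        exact mul_le_mul_of_nonneg_left (key y) (hSnn x y)
      refine hstep.trans ?_
      rw [← Finset.sum_mul]
      calc (∑ y, S x y) * ((catalan (m + 1) : ℝ) * maxRowNorm S ^ m)
          ≤ maxRowNorm S * ((catalan (m + 1) : ℝ) * maxRowNorm S ^ m) :=
            mul_le_mul_of_nonneg_right (hrow x) (by positivity)
        _ = (catalan (m + 1) : ℝ) * maxRowNorm S ^ (m + 1) := by ring
end

section
/- Let (z_j)_{j≥0} be reals with z_0 = 1, 0 < z_j ≤ 1 for all j ≥ 1, and z_{a+b+1} ≤ z_a·z_b for all integers a, b ≥ 0. Let n ≥ 1 and h ≥ 0 be integers. For ω ∈ {+1,−1}^n let h_i := h + ∑_{j=1}^i ω_j, Δω := ∑_{j=1}^n ω_j, and say ω is admissible if h_i ≥ 0 for all 0 ≤ i ≤ n. Then ∑_{ω admissible} ((h + 1 + Δω)/(h + 1)) · W_U(ω) ≤ ∑_{ω ∈ {+1,−1}^n} W_U(ω), where W_U(ω) := ∏_{j≥1} z_j^{U_j(ω)} and U_j(ω) is the number of maximal blocks of consecutive +1's in ω of length exactly j. 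-/
/-- The `p`-th step (`+1` or `-1`) of the sign sequence `ω`, extended by `0` outside. -/
def stepB (n : ℕ) (ω : Fin n → Bool) (p : ℕ) : ℤ :=
  if hp : p < n then (if ω ⟨p, hp⟩ then 1 else -1) else 0

/-- Height after `i` steps of the walk started at height `h` with increments `ω`. -/
def hgtB (n : ℕ) (ω : Fin n → Bool) (h : ℤ) (i : ℕ) : ℤ :=
  h + ∑ j ∈ Finset.range i, stepB n ω j

/-- Number of maximal blocks of consecutive `+1`'s of length exactly `j` in `ω`. -/
def upBlocks (n : ℕ) (ω : Fin n → Bool) (j : ℕ) : ℕ :=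
  ((Finset.range n).filter fun i =>
    (∀ m < j, stepB n ω (i + m) = 1) ∧ stepB n ω (i + j) ≠ 1 ∧
      (i = 0 ∨ stepB n ω (i - 1) ≠ 1)).card

namespace BotLawAux

def eps (b : Bool) : ℤ := if b then 1 else -1

def lstep : List Bool → ℕ → ℤ
  | [], _ => 0
  | b :: _, 0 => eps b
  | _ :: l, p + 1 => lstep l p

def ubs (s : ℕ → ℤ) (N j : ℕ) : ℕ :=
  ((Finset.range N).filter fun i =>
    (∀ m < j, s (i + m) = 1) ∧ s (i + j) ≠ 1 ∧ (i = 0 ∨ s (i - 1) ≠ 1)).card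

lemma lstep_ge (l : List Bool) (p : ℕ) (hp : l.length ≤ p) : lstep l p = 0 := by
  induction l generalizing p with
  | nil => rfl
  | cons b l ih =>
    cases p with
    | zero => simp at hp
    | succ p => exact ih p (by simpa using hp)

lemma lstep_replicate_append (a : ℕ) (l : List Bool) (p : ℕ) :
    lstep (List.replicate a true ++ l) p = if p < a then 1 else lstep l (p - a) := by
  induction a generalizing p with
  | zero => simp [List.replicate]
  | succ a ih =>
    cases p with
    | zero => simp [List.replicate, lstep, eps]
    | succ p =>
      simpa [List.replicate_succ, lstep, Nat.succ_lt_succ_iff, Nat.succ_sub_succ] using ih p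

/-- the only block of an all-(+1) pattern of length `a` is the full one -/
lemma ubs_all (s : ℕ → ℤ) (a : ℕ) (hlt : ∀ p, s p = 1 ↔ p < a) (j : ℕ) (hj : 1 ≤ j) :
    ubs s a j = if j = a then 1 else 0 := by
  unfold ubs
  have hfil : ((Finset.range a).filter fun i =>
      (∀ m < j, s (i + m) = 1) ∧ s (i + j) ≠ 1 ∧ (i = 0 ∨ s (i - 1) ≠ 1)) =
      if j = a then {0} else ∅ := by
    ext i
    simp only [Finset.mem_filter, Finset.mem_range]
    constructor
    · rintro ⟨hi, h1, h2, h3⟩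
      have hi0 : i = 0 := by
        rcases h3 with h3 | h3
        · exact h3
        · by_contra hne
          exact h3 ((hlt (i - 1)).2 (by omega))
      subst hi0
      have hja : j = a := by
        by_contra hne
        rcases lt_or_gt_of_ne hne with hlt' | hgt
        · exact h2 ((hlt (0 + j)).2 (by omega))
        · have := h1 a hgt
          rw [hlt] at this; omega
      simp [hja]
    · intro hi
      by_cases hja : j = a
      · rw [if_pos hja, Finset.mem_singleton] at hi
        subst hi
        refine ⟨by omega, fun m hm => (hlt _).2 (by omega), ?_, Or.inl rfl⟩
        intro hc; rw [hlt] at hc; omega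
      · rw [if_neg hja] at hi; simp at hi
  rw [hfil]
  split <;> simp

/-- splitting off an initial block of length `a` followed by a non-`+1` -/
lemma ubs_shift (s : ℕ → ℤ) (a m : ℕ) (hlt : ∀ p < a, s p = 1) (ha : s a ≠ 1)
    (j : ℕ) (hj : 1 ≤ j) :
    ubs s (a + 1 + m) j = (if j = a then 1 else 0) + ubs (fun p => s (a + 1 + p)) m j := by
  classical
  set P : ℕ → Prop := fun i =>
    (∀ m' < j, s (i + m') = 1) ∧ s (i + j) ≠ 1 ∧ (i = 0 ∨ s (i - 1) ≠ 1) with hP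
  have hrange : Finset.range (a + 1 + m) =
      Finset.range (a + 1) ∪ (Finset.range m).map (addLeftEmbedding (a + 1)) :=
    Finset.range_add (a + 1) m
  have hdisj : Disjoint ((Finset.range (a + 1)).filter P)
      (((Finset.range m).map (addLeftEmbedding (a + 1))).filter P) := by
    rw [Finset.disjoint_left]
    intro x hx hy
    simp only [Finset.mem_filter, Finset.mem_range] at hx
    simp only [Finset.mem_filter, Finset.mem_map, Finset.mem_range] at hy
    obtain ⟨⟨y, _, hy'⟩, _⟩ := hy
    simp only [addLeftEmbedding_apply] at hy'
    omega
  -- card of the first part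
  have hfirst : ((Finset.range (a + 1)).filter P).card = if j = a then 1 else 0 := by
    have hfil : ((Finset.range (a + 1)).filter P) = if j = a then {0} else ∅ := by
      ext i
      simp only [Finset.mem_filter, Finset.mem_range, hP]
      constructor
      · rintro ⟨hi, c1, c2, c3⟩
        have hi0 : i = 0 := by
          rcases c3 with c3 | c3
          · exact c3
          · by_contra hne
            exact c3 (hlt (i - 1) (by omega))
        subst hi0
        have hja : j = a := by
          by_contra hne
          rcases lt_or_gt_of_ne hne with hlt' | hgt
          · exact c2 (by rw [Nat.zero_add]; exact hlt j hlt')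
          · have := c1 a hgt
            rw [Nat.zero_add] at this
            exact ha this
        simp [hja]
      · intro hi
        by_cases hja : j = a
        · rw [if_pos hja, Finset.mem_singleton] at hi
          subst hi
          subst hja
          exact ⟨by omega, fun m' hm' => by rw [Nat.zero_add]; exact hlt m' hm',
            by rw [Nat.zero_add]; exact ha, Or.inl rfl⟩
        · rw [if_neg hja] at hi; simp at hi
    rw [hfil]; split <;> simp
  -- card of the second part
  have hsecond : (((Finset.range m).map (addLeftEmbedding (a + 1))).filter P).card =
      ubs (fun p => s (a + 1 + p)) m j := by
    rw [Finset.filter_map, Finset.card_map]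
    unfold ubs
    congr 1
    apply Finset.filter_congr
    intro y hy
    simp only [Function.comp, addLeftEmbedding_apply, hP]
    constructor
    · rintro ⟨c1, c2, c3⟩
      refine ⟨?_, ?_, ?_⟩
      · intro m' hm'
        have := c1 m' hm'
        rw [show a + 1 + y + m' = a + 1 + (y + m') by omega] at this
        exact this
      · rw [show a + 1 + y + j = a + 1 + (y + j) by omega] at c2; exact c2
      · rcases Nat.eq_zero_or_pos y with rfl | hy0
        · exact Or.inl rfl
        · rcases c3 with c3 | c3
          · omega
          · right; rw [show a + 1 + y - 1 = a + 1 + (y - 1) by omega] at c3; exact c3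
    · rintro ⟨c1, c2, c3⟩
      refine ⟨?_, ?_, ?_⟩
      · intro m' hm'
        rw [show a + 1 + y + m' = a + 1 + (y + m') by omega]
        exact c1 m' hm'
      · rw [show a + 1 + y + j = a + 1 + (y + j) by omega]; exact c2
      · right
        rcases Nat.eq_zero_or_pos y with rfl | hy0
        · rw [show a + 1 + 0 - 1 = a by omega]; exact ha
        · rcases c3 with c3 | c3
          · exact absurd c3 (by omega)
          · rw [show a + 1 + y - 1 = a + 1 + (y - 1) by omega]; exact c3
  have key : ubs s (a + 1 + m) j = ((Finset.range (a + 1 + m)).filter P).card := rfl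
  rw [key, hrange, Finset.filter_union, Finset.card_union_of_disjoint hdisj, hfirst, hsecond]

/-- no blocks longer than the list -/
lemma ubs_long (l : List Bool) (j : ℕ) (hj : l.length < j) : ubs (lstep l) l.length j = 0 := by
  unfold ubs
  rw [Finset.card_eq_zero, Finset.filter_eq_empty_iff]
  intro i hi
  simp only [Finset.mem_range] at hi
  rintro ⟨c1, -, -⟩
  have h1 := c1 (l.length - i) (by omega)
  rw [show i + (l.length - i) = l.length by omega] at h1
  rw [lstep_ge l l.length le_rfl] at h1
  omega


variable (z : ℕ → ℝ)

def wt : ℕ → List Bool → ℝ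
  | a, [] => z a
  | a, true :: l => wt (a + 1) l
  | a, false :: l => z a * wt 0 l

lemma prod_ite_single (hz0 : z 0 = 1) (a N : ℕ) (ha : a ≤ N) :
    ∏ j ∈ Finset.Icc 1 N, z j ^ (if j = a then 1 else 0) = z a := by
  cases a with
  | zero =>
    refine Eq.trans (Finset.prod_eq_one ?_) hz0.symm
    intro j hj
    rw [Finset.mem_Icc] at hj
    rw [if_neg (by omega), pow_zero]
  | succ a =>
    rw [Finset.prod_eq_single_of_mem (a + 1) (Finset.mem_Icc.2 ⟨by omega, ha⟩)
      (fun b _ hb => by rw [if_neg hb, pow_zero])]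
    rw [if_pos rfl, pow_one]

lemma G (hz0 : z 0 = 1) : ∀ (l : List Bool) (a : ℕ),
    ∏ j ∈ Finset.Icc 1 (a + l.length),
      z j ^ ubs (lstep (List.replicate a true ++ l)) (a + l.length) j = wt z a l := by
  intro l
  induction l with
  | nil =>
    intro a
    simp only [List.length_nil, List.append_nil, Nat.add_zero, wt]
    have hcongr : ∀ j ∈ Finset.Icc 1 a,
        z j ^ ubs (lstep (List.replicate a true)) a j = z j ^ (if j = a then 1 else 0) := by
      intro j hj
      rw [Finset.mem_Icc] at hj
      congr 1
      apply ubs_all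
      · intro p
        rw [show (List.replicate a true : List Bool) = List.replicate a true ++ [] by simp,
          lstep_replicate_append]
        constructor
        · intro hp; by_contra hc; rw [if_neg hc] at hp; simp [lstep] at hp
        · intro hp; rw [if_pos hp]
      · exact hj.1
    rw [Finset.prod_congr rfl hcongr, prod_ite_single z hz0 a a le_rfl]
  | cons b l ih =>
    intro a
    cases b with
    | true =>
      have hlist : List.replicate a true ++ true :: l = List.replicate (a + 1) true ++ l := by
        rw [List.replicate_succ', List.append_assoc, List.singleton_append]
      have harith : a + (true :: l).length = (a + 1) + l.length := by simp; omega
      rw [hlist, harith]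
      rw [ih (a + 1)]
      rfl
    | false =>
      have harith : a + (false :: l).length = a + 1 + l.length := by simp; omega
      rw [harith]
      set s := lstep (List.replicate a true ++ false :: l) with hs
      have hlt : ∀ p < a, s p = 1 := by
        intro p hp
        rw [hs, lstep_replicate_append, if_pos hp]
      have hsa : s a ≠ 1 := by
        rw [hs, lstep_replicate_append, if_neg (lt_irrefl a), Nat.sub_self]
        simp [lstep, eps]
      have hshift : (fun p => s (a + 1 + p)) = lstep l := by
        funext p
        rw [hs, lstep_replicate_append, if_neg (by omega),
          show a + 1 + p - a = p + 1 by omega]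
        rfl
      have hcongr : ∀ j ∈ Finset.Icc 1 (a + 1 + l.length),
          z j ^ ubs s (a + 1 + l.length) j
            = z j ^ (if j = a then 1 else 0) * z j ^ ubs (lstep l) l.length j := by
        intro j hj
        rw [Finset.mem_Icc] at hj
        rw [ubs_shift s a l.length hlt hsa j hj.1, hshift, pow_add]
      rw [Finset.prod_congr rfl hcongr, Finset.prod_mul_distrib,
        prod_ite_single z hz0 a (a + 1 + l.length) (by omega)]
      have hsub : ∏ j ∈ Finset.Icc 1 (a + 1 + l.length), z j ^ ubs (lstep l) l.length j
          = ∏ j ∈ Finset.Icc 1 l.length, z j ^ ubs (lstep l) l.length j := by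
        refine (Finset.prod_subset (Finset.Icc_subset_Icc_right (by omega)) ?_).symm
        intro j hj hj'
        rw [Finset.mem_Icc] at hj hj'
        rw [ubs_long l j (by omega), pow_zero]
      rw [hsub]
      have h0 := ih 0
      simp only [List.replicate_zero, List.nil_append, Nat.zero_add] at h0
      rw [h0]
      rfl


def delta : List Bool → ℤ := fun l => (l.map eps).sum

def allNN : ℤ → List Bool → Bool
  | h, [] => decide (0 ≤ h)
  | h, b :: l => decide (0 ≤ h) && allNN (h + eps b) l

lemma allNN_neg (h : ℤ) (hh : h < 0) (l : List Bool) : allNN h l = false := by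
  cases l with
  | nil => simp only [allNN, decide_eq_false_iff_not]; omega
  | cons b l =>
    simp only [allNN, Bool.and_eq_false_imp, decide_eq_true_eq]
    intro hc; exact absurd hc (by omega)

lemma wt_true (a : ℕ) (l : List Bool) : wt z a (true :: l) = wt z (a + 1) l := rfl
lemma wt_false (a : ℕ) (l : List Bool) : wt z a (false :: l) = z a * wt z 0 l := rfl

lemma wt_nonneg (hzn : ∀ a, 0 ≤ z a) : ∀ (l : List Bool) (a : ℕ), 0 ≤ wt z a l := by
  intro l
  induction l with
  | nil => exact fun a => hzn a
  | cons b l ih =>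
    intro a
    cases b with
    | true => exact ih (a + 1)
    | false => exact mul_nonneg (hzn a) (ih 0)

lemma wt_sub (hzn : ∀ a, 0 ≤ z a) (hsub : ∀ a b : ℕ, z (a + b + 1) ≤ z a * z b) :
    ∀ (l : List Bool) (a b : ℕ), wt z (a + b + 1) l ≤ z a * wt z b l := by
  intro l
  induction l with
  | nil => exact fun a b => hsub a b
  | cons c l ih =>
    intro a b
    cases c with
    | true =>
      rw [wt_true, wt_true, show a + b + 1 + 1 = a + (b + 1) + 1 by omega]
      exact ih a (b + 1)
    | false =>
      rw [wt_false, wt_false, ← mul_assoc]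
      exact mul_le_mul_of_nonneg_right (hsub a b) (wt_nonneg z hzn l 0)

/-- sum over all sign sequences -/
def SR (n a : ℕ) : ℝ := ∑ ω : Fin n → Bool, wt z a (List.ofFn ω)

/-- weighted sum over admissible sign sequences -/
def SM (n a : ℕ) (h : ℤ) : ℝ := ∑ ω : Fin n → Bool,
    (if allNN h (List.ofFn ω) then ((h + 1 + delta (List.ofFn ω) : ℤ) : ℝ) else 0) *
      wt z a (List.ofFn ω)

lemma sum_split (n : ℕ) (F : List Bool → ℝ) :
    ∑ ω : Fin (n + 1) → Bool, F (List.ofFn ω)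
      = (∑ ω : Fin n → Bool, F (true :: List.ofFn ω))
        + ∑ ω : Fin n → Bool, F (false :: List.ofFn ω) := by
  rw [← Equiv.sum_comp (Fin.consEquiv (fun _ : Fin (n + 1) => Bool))
    (fun ω => F (List.ofFn ω)), Fintype.sum_prod_type, Fintype.sum_bool]
  congr 1 <;> refine Finset.sum_congr rfl fun ω _ => ?_ <;> congr 1 <;>
    simp [Fin.consEquiv, List.ofFn_succ, Fin.cons_zero, Fin.cons_succ]

lemma SR_zero (a : ℕ) : SR z 0 a = z a := by
  simp only [SR, Fintype.sum_unique, List.ofFn_zero]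
  rfl

lemma SR_succ (n a : ℕ) : SR z (n + 1) a = SR z n (a + 1) + z a * SR z n 0 := by
  rw [SR, sum_split n (wt z a)]
  simp only [wt_true, wt_false]
  rw [← Finset.mul_sum]
  rfl

lemma SR_nonneg (hzn : ∀ a, 0 ≤ z a) (n a : ℕ) : 0 ≤ SR z n a :=
  Finset.sum_nonneg fun ω _ => wt_nonneg z hzn _ a

lemma SR_le (hzn : ∀ a, 0 ≤ z a) (hsub : ∀ a b : ℕ, z (a + b + 1) ≤ z a * z b) (n a : ℕ) :
    SR z n (a + 1) ≤ z a * SR z n 0 := by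
  rw [SR, SR, Finset.mul_sum]
  refine Finset.sum_le_sum fun ω _ => ?_
  have := wt_sub z hzn hsub (List.ofFn ω) a 0
  rwa [Nat.add_zero] at this

lemma SM_neg (n a : ℕ) (h : ℤ) (hh : h < 0) : SM z n a h = 0 := by
  rw [SM]
  refine Finset.sum_eq_zero fun ω _ => ?_
  rw [allNN_neg h hh]
  simp

lemma SM_succ (n a : ℕ) (h : ℤ) (hh : 0 ≤ h) :
    SM z (n + 1) a h = SM z n (a + 1) (h + 1) + z a * SM z n 0 (h - 1) := by
  rw [SM, sum_split n (fun l => (if allNN h l then ((h + 1 + delta l : ℤ) : ℝ) else 0) * wt z a l)]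
  congr 1
  · refine Finset.sum_congr rfl fun ω _ => ?_
    rw [wt_true]
    congr 1
    have hcond : allNN h (true :: List.ofFn ω) = allNN (h + 1) (List.ofFn ω) := by
      simp [allNN, eps, decide_eq_true_eq, hh]
    rw [hcond]
    have hdel : delta (true :: List.ofFn ω) = 1 + delta (List.ofFn ω) := by
      simp [delta, eps]
    rw [hdel]
    congr 1
    push_cast
    ring
  · rw [SM, Finset.mul_sum]
    refine Finset.sum_congr rfl fun ω _ => ?_
    rw [wt_false]
    have hcond : allNN h (false :: List.ofFn ω) = allNN (h - 1) (List.ofFn ω) := by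
      simp only [allNN, eps, if_neg Bool.false_ne_true, Bool.if_false_left]
      rw [show h + -1 = h - 1 by ring]
      simp [hh]
    have hdel : delta (false :: List.ofFn ω) = -1 + delta (List.ofFn ω) := by
      simp [delta, eps]
    rw [hcond, hdel]
    have : ((h + 1 + (-1 + delta (List.ofFn ω)) : ℤ) : ℝ)
        = ((h - 1 + 1 + delta (List.ofFn ω) : ℤ) : ℝ) := by push_cast; ring
    rw [this]
    ring

lemma key (hz0 : z 0 = 1) (hzn : ∀ a, 0 ≤ z a)
    (hsub : ∀ a b : ℕ, z (a + b + 1) ≤ z a * z b) :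
    ∀ (n a : ℕ) (h : ℤ), 0 ≤ h → SM z n a h ≤ ((h : ℝ) + 1) * SR z n a := by
  intro n
  induction n with
  | zero =>
    intro a h hh
    rw [SR_zero, SM, Fintype.sum_unique]
    simp only [List.ofFn_zero]
    rw [show allNN h [] = true by simp [allNN, hh]]
    rw [if_pos rfl]
    rw [show delta [] = 0 from rfl]
    rw [show wt z a [] = z a from rfl]
    apply le_of_eq
    push_cast
    ring
  | succ n ih =>
    intro a h hh
    rw [SM_succ z n a h hh, SR_succ]
    have IH1 := ih (a + 1) (h + 1) (by omega)
    have hA := SR_le z hzn hsub n a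
    have hza := hzn a
    have hSR0 := SR_nonneg z hzn n 0
    have hh' : (0 : ℝ) ≤ (h : ℝ) := by exact_mod_cast hh
    by_cases h1 : 1 ≤ h
    · have IH2 := ih 0 (h - 1) (by omega)
      push_cast at IH1 IH2
      have IH2' : z a * SM z n 0 (h - 1) ≤ z a * (((h : ℝ) - 1 + 1) * SR z n 0) :=
        mul_le_mul_of_nonneg_left IH2 hza
      have hAt : (h : ℝ) * SR z n (a + 1) ≤ (h : ℝ) * (z a * SR z n 0) :=
        mul_le_mul_of_nonneg_left hA hh'
      nlinarith [IH1, IH2', hA, hAt]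
    · have h0 : h = 0 := by omega
      subst h0
      rw [SM_neg z n 0 (0 - 1) (by norm_num)]
      norm_num at IH1 ⊢
      linarith [IH1, hA]


lemma stepB_eq_lstep : ∀ (n : ℕ) (ω : Fin n → Bool) (p : ℕ),
    stepB n ω p = lstep (List.ofFn ω) p := by
  intro n
  induction n with
  | zero =>
    intro ω p
    rw [show (List.ofFn ω : List Bool) = [] from rfl]
    unfold stepB
    rw [dif_neg (by omega)]
    rfl
  | succ n ih =>
    intro ω p
    rw [List.ofFn_succ]
    cases p with
    | zero =>
      unfold stepB
      rw [dif_pos (by omega)]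
      rfl
    | succ p =>
      show stepB (n + 1) ω (p + 1) = lstep (List.ofFn fun i => ω i.succ) p
      rw [← ih (fun i => ω i.succ) p]
      unfold stepB
      by_cases hp : p < n
      · rw [dif_pos (by omega), dif_pos hp]
        rfl
      · rw [dif_neg (by omega), dif_neg hp]

lemma delta_eq (n : ℕ) (ω : Fin n → Bool) :
    (∑ j ∈ Finset.range n, stepB n ω j) = delta (List.ofFn ω) := by
  rw [← Fin.sum_univ_eq_sum_range (fun j => stepB n ω j) n]
  unfold delta
  rw [List.map_ofFn, List.sum_ofFn]
  refine Finset.sum_congr rfl fun i _ => ?_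
  unfold stepB
  rw [dif_pos i.isLt]
  simp [eps, Function.comp, Fin.eta]

lemma stepB_cons_zero (n : ℕ) (b : Bool) (ω : Fin n → Bool) :
    stepB (n + 1) (Fin.cons b ω) 0 = eps b := by
  unfold stepB
  rw [dif_pos (by omega)]
  rfl

lemma stepB_cons_succ (n : ℕ) (b : Bool) (ω : Fin n → Bool) (p : ℕ) :
    stepB (n + 1) (Fin.cons b ω) (p + 1) = stepB n ω p := by
  unfold stepB
  by_cases hp : p < n
  · rw [dif_pos (by omega), dif_pos hp]
    have : (⟨p + 1, by omega⟩ : Fin (n + 1)) = Fin.succ ⟨p, hp⟩ := rfl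
    rw [this, Fin.cons_succ]
  · rw [dif_neg (by omega), dif_neg hp]

lemma hgtB_zero (n : ℕ) (ω : Fin n → Bool) (h : ℤ) : hgtB n ω h 0 = h := by
  simp [hgtB]

lemma hgtB_cons (n : ℕ) (b : Bool) (ω : Fin n → Bool) (h : ℤ) (i : ℕ) :
    hgtB (n + 1) (Fin.cons b ω) h (i + 1) = hgtB n ω (h + eps b) i := by
  unfold hgtB
  rw [Finset.sum_range_succ']
  rw [stepB_cons_zero]
  have : ∀ x ∈ Finset.range i, stepB (n + 1) (Fin.cons b ω) (x + 1) = stepB n ω x :=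
    fun x _ => stepB_cons_succ n b ω x
  rw [Finset.sum_congr rfl this]
  ring

lemma adm_iff : ∀ (n : ℕ) (ω : Fin n → Bool) (h : ℤ),
    (∀ i ≤ n, 0 ≤ hgtB n ω h i) ↔ allNN h (List.ofFn ω) = true := by
  intro n
  induction n with
  | zero =>
    intro ω h
    rw [show (List.ofFn ω : List Bool) = [] from rfl]
    simp only [allNN, decide_eq_true_eq]
    constructor
    · intro H
      have := H 0 le_rfl
      rwa [hgtB_zero] at this
    · intro H i hi
      interval_cases i
      rwa [hgtB_zero]
  | succ n ih =>
    intro ω h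
    have hω : Fin.cons (ω 0) (Fin.tail ω) = ω := Fin.cons_self_tail ω
    have hofn : List.ofFn ω = ω 0 :: List.ofFn (Fin.tail ω) := by
      rw [List.ofFn_succ]
      rfl
    rw [hofn]
    simp only [allNN, Bool.and_eq_true, decide_eq_true_eq]
    constructor
    · intro H
      refine ⟨by have := H 0 (by omega); rwa [hgtB_zero] at this, ?_⟩
      rw [← ih (Fin.tail ω) (h + eps (ω 0))]
      intro i hi
      have := H (i + 1) (by omega)
      rw [← hω, hgtB_cons] at this
      exact this
    · rintro ⟨H0, H1⟩
      intro i hi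
      cases i with
      | zero => rwa [hgtB_zero]
      | succ i =>
        rw [← hω, hgtB_cons]
        exact (ih (Fin.tail ω) (h + eps (ω 0))).2 H1 i (by omega)

lemma upBlocks_eq (n : ℕ) (ω : Fin n → Bool) (hz0 : z 0 = 1) :
    ∏ j ∈ Finset.Icc 1 n, z j ^ upBlocks n ω j = wt z 0 (List.ofFn ω) := by
  have hG := G z hz0 (List.ofFn ω) 0
  simp only [List.replicate_zero, List.nil_append, Nat.zero_add, List.length_ofFn] at hG
  rw [← hG]
  refine Finset.prod_congr rfl fun j _ => ?_
  congr 1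
  show ubs (stepB n ω) n j = ubs (lstep (List.ofFn ω)) n j
  rw [funext (stepB_eq_lstep n ω)]

end BotLawAux

open BotLawAux in
/-- Comparison of the nonnegative-walk (``bot``) law with the simple random walk:
the weighted sum over admissible paths is dominated by the unweighted simple
random walk sum. -/
theorem bot_law_dominated_by_srw (z : ℕ → ℝ) (hz0 : z 0 = 1)
    (hz : ∀ j, 1 ≤ j → 0 < z j ∧ z j ≤ 1)
    (hsub : ∀ a b : ℕ, z (a + b + 1) ≤ z a * z b)
    (n : ℕ) (hn : 1 ≤ n) (h : ℤ) (hh : 0 ≤ h) :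
    ∑ ω ∈ Finset.univ.filter (fun ω : Fin n → Bool => ∀ i ≤ n, 0 ≤ hgtB n ω h i),
        (((h : ℝ) + 1 + ((∑ j ∈ Finset.range n, stepB n ω j : ℤ) : ℝ)) / ((h : ℝ) + 1)) *
          ∏ j ∈ Finset.Icc 1 n, z j ^ upBlocks n ω j ≤
      ∑ ω : Fin n → Bool, ∏ j ∈ Finset.Icc 1 n, z j ^ upBlocks n ω j := by
  have hzn : ∀ a, 0 ≤ z a := by
    intro a
    cases a with
    | zero => rw [hz0]; norm_num
    | succ a => exact le_of_lt (hz (a + 1) (by omega)).1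
  have hpos : (0 : ℝ) < (h : ℝ) + 1 := by
    have : (0 : ℝ) ≤ (h : ℝ) := by exact_mod_cast hh
    linarith
  have hrhs : ∑ ω : Fin n → Bool, ∏ j ∈ Finset.Icc 1 n, z j ^ upBlocks n ω j = SR z n 0 :=
    Finset.sum_congr rfl fun ω _ => upBlocks_eq z n ω hz0
  rw [Finset.sum_filter, hrhs]
  have hlhs : ∑ ω : Fin n → Bool,
      (if (∀ i ≤ n, 0 ≤ hgtB n ω h i) then
        (((h : ℝ) + 1 + ((∑ j ∈ Finset.range n, stepB n ω j : ℤ) : ℝ)) / ((h : ℝ) + 1)) *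
          ∏ j ∈ Finset.Icc 1 n, z j ^ upBlocks n ω j else 0)
      = (1 / ((h : ℝ) + 1)) * SM z n 0 h := by
    rw [SM, Finset.mul_sum]
    refine Finset.sum_congr rfl fun ω _ => ?_
    by_cases hadm : ∀ i ≤ n, 0 ≤ hgtB n ω h i
    · rw [if_pos hadm, if_pos ((adm_iff n ω h).1 hadm)]
      rw [upBlocks_eq z n ω hz0, delta_eq n ω]
      push_cast
      field_simp
    · rw [if_neg hadm, if_neg (by
        intro hc
        exact hadm ((adm_iff n ω h).2 hc))]
      ring
  rw [hlhs]
  have hkey := key z hz0 hzn hsub n 0 h hh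
  calc (1 / ((h : ℝ) + 1)) * SM z n 0 h
      ≤ (1 / ((h : ℝ) + 1)) * (((h : ℝ) + 1) * SR z n 0) :=
        mul_le_mul_of_nonneg_left hkey (by positivity)
    _ = SR z n 0 := by field_simp
end

section
/- Let (z_j)_{j≥0} be reals with z_0 = 1, 0 < z_j ≤ 1 for all j ≥ 1, and z_{a+b+1} ≤ z_a·z_b for all integers a, b ≥ 0. Let K, t, h, n be integers with n ≥ 1, t ≥ 0, t + n ≤ K, h ≥ 2n, and h ≤ K − t. For ω ∈ {+1,−1}^n let h_i := h + ∑_{j=1}^i ω_j; say ω is admissible if h_i ≤ K − t − i for all 0 ≤ i ≤ n. For 0 ≤ i < n set q_{i+1} := (1/2)·(K − t − i − h_i)/(K − t − i) and P^{top}(ω) := ∏_{i=0}^{n−1} q_{i+1}^{𝟙(ω_{i+1}=+1)} (1 − q_{i+1})^{𝟙(ω_{i+1}=−1)}. Then ∑_{ω admissible} P^{top}(ω) · W_D(ω) ≤ 2^{−n} ∑_{ω ∈ {+1,−1}^n} W_D(ω), where W_D(ω) := ∏_{j≥1} z_j^{D_j(ω)} and D_j(ω) is the number of maximal blocks of consecutive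 −1's in ω of length exactly j. -/
/-- Number of maximal blocks of consecutive `-1`'s of length exactly `j` in `ω`. -/
def downBlocks (n : ℕ) (ω : Fin n → Bool) (j : ℕ) : ℕ :=
  ((Finset.range n).filter fun i =>
    (∀ m < j, stepB n ω (i + m) = -1) ∧ stepB n ω (i + j) ≠ -1 ∧
      (i = 0 ∨ stepB n ω (i - 1) ≠ -1)).card

/-- The `top` one-step up-probability at step `i+1`. -/
noncomputable def qTop (K t : ℤ) (n : ℕ) (ω : Fin n → Bool) (h : ℤ) (i : ℕ) : ℝ :=
  1 / 2 * (((K : ℝ) - (t : ℝ) - (i : ℝ) - (hgtB n ω h i : ℝ)) /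
    ((K : ℝ) - (t : ℝ) - (i : ℝ)))

/-- The `top` law of a path `ω`. -/
noncomputable def pTopProb (K t : ℤ) (n : ℕ) (ω : Fin n → Bool) (h : ℤ) : ℝ :=
  ∏ i ∈ Finset.range n,
    (qTop K t n ω h i) ^ (if stepB n ω i = 1 then 1 else 0) *
      (1 - qTop K t n ω h i) ^ (if stepB n ω i = -1 then 1 else 0)

def leadL : List Bool → ℕ
  | [] => 0
  | b :: l => if b then 0 else leadL l + 1

def leadB (n : ℕ) (ω : Fin n → Bool) : ℕ := leadL (List.ofFn ω)

lemma leadL_le_length (l : List Bool) : leadL l ≤ l.length := by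
  induction l with
  | nil => simp [leadL]
  | cons b l ih => cases b <;> simp [leadL] <;> omega

lemma leadL_lt (l : List Bool) (m : ℕ) (hm : m < leadL l) (h : m < l.length) :
    l.get ⟨m, h⟩ = false := by
  induction l generalizing m with
  | nil => simp at h
  | cons b l ih =>
    cases b with
    | true => simp [leadL] at hm
    | false =>
      cases m with
      | zero => rfl
      | succ m => exact ih m (by simpa [leadL] using hm) (by simpa using h)

lemma leadL_get (l : List Bool) (h : leadL l < l.length) : l.get ⟨leadL l, h⟩ = true := by
  induction l with
  | nil => simp at h
  | cons b l ih =>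
    cases b with
    | true => rfl
    | false => exact ih (by simpa [leadL] using h)

lemma stepB_lt {n : ℕ} (ω : Fin n → Bool) {p : ℕ} (hp : p < n) :
    stepB n ω p = if ω ⟨p, hp⟩ then 1 else -1 := dif_pos hp

lemma stepB_ge {n : ℕ} (ω : Fin n → Bool) {p : ℕ} (hp : n ≤ p) :
    stepB n ω p = 0 := dif_neg (by omega)

lemma leadB_le (n : ℕ) (ω : Fin n → Bool) : leadB n ω ≤ n := by
  simpa [leadB] using leadL_le_length (List.ofFn ω)

lemma stepB_of_lt_lead {n : ℕ} (ω : Fin n → Bool) {m : ℕ} (hm : m < leadB n ω) :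
    stepB n ω m = -1 := by
  have hmn : m < n := lt_of_lt_of_le hm (leadB_le n ω)
  have h2 : m < (List.ofFn ω).length := by simpa using hmn
  have := leadL_lt (List.ofFn ω) m hm h2
  rw [List.get_ofFn] at this
  rw [stepB_lt ω hmn]
  simp_all

lemma stepB_lead_ne {n : ℕ} (ω : Fin n → Bool) : stepB n ω (leadB n ω) ≠ -1 := by
  rcases lt_or_ge (leadB n ω) n with hlt | hge
  · have h2 : leadB n ω < (List.ofFn ω).length := by simpa using hlt
    have := leadL_get (List.ofFn ω) h2
    rw [List.get_ofFn] at this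
    rw [stepB_lt ω hlt, show ω ⟨leadB n ω, hlt⟩ = true from this]
    decide
  · rw [stepB_ge ω hge]; decide

lemma ofFn_cons {n : ℕ} (b : Bool) (ω : Fin n → Bool) :
    List.ofFn (Fin.cons b ω) = b :: List.ofFn ω := by
  rw [List.ofFn_succ]; simp

lemma leadB_cons_true {n : ℕ} (ω : Fin n → Bool) : leadB (n + 1) (Fin.cons true ω) = 0 := by
  simp [leadB, ofFn_cons, leadL]

lemma leadB_cons_false {n : ℕ} (ω : Fin n → Bool) :
    leadB (n + 1) (Fin.cons false ω) = leadB n ω + 1 := by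
  simp [leadB, ofFn_cons, leadL]

lemma stepB_cons_zero {n : ℕ} (b : Bool) (ω : Fin n → Bool) :
    stepB (n + 1) (Fin.cons b ω) 0 = if b then 1 else -1 := by
  rw [stepB_lt _ (Nat.succ_pos n)]; rfl

lemma stepB_cons_succ {n : ℕ} (b : Bool) (ω : Fin n → Bool) (p : ℕ) :
    stepB (n + 1) (Fin.cons b ω) (p + 1) = stepB n ω p := by
  by_cases hp : p < n
  · rw [stepB_lt _ (by omega : p + 1 < n + 1), stepB_lt _ hp]
    rw [show (⟨p + 1, by omega⟩ : Fin (n + 1)) = Fin.succ ⟨p, hp⟩ from rfl, Fin.cons_succ]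
  · rw [stepB_ge _ (by omega), stepB_ge _ (by omega)]

lemma hgtB_zero {n : ℕ} (ω : Fin n → Bool) (h : ℤ) : hgtB n ω h 0 = h := by
  simp [hgtB]

lemma hgtB_cons {n : ℕ} (b : Bool) (ω : Fin n → Bool) (h : ℤ) (i : ℕ) :
    hgtB (n + 1) (Fin.cons b ω) h (i + 1) =
      hgtB n ω (h + if b then 1 else -1) i := by
  unfold hgtB
  rw [Finset.sum_range_succ']
  simp only [stepB_cons_succ, stepB_cons_zero]
  ring

lemma downBlocks_eq_sum (n : ℕ) (ω : Fin n → Bool) (j : ℕ) :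
    downBlocks n ω j = ∑ i ∈ Finset.range n,
      if (∀ m < j, stepB n ω (i + m) = -1) ∧ stepB n ω (i + j) ≠ -1 ∧
          (i = 0 ∨ stepB n ω (i - 1) ≠ -1) then 1 else 0 := by
  rw [downBlocks, Finset.card_filter]

lemma downBlocks_gt {n : ℕ} (ω : Fin n → Bool) {j : ℕ} (hj : n < j) :
    downBlocks n ω j = 0 := by
  rw [downBlocks_eq_sum]
  apply Finset.sum_eq_zero
  intro i hi
  rw [Finset.mem_range] at hi
  rw [if_neg]
  rintro ⟨h1, -, -⟩
  have := h1 (n - i) (by omega)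
  rw [show i + (n - i) = n by omega, stepB_ge ω le_rfl] at this
  exact absurd this (by decide)

lemma blk0_iff {n : ℕ} (ω : Fin n → Bool) {j : ℕ} (hj : 1 ≤ j) :
    ((∀ m < j, stepB n ω (0 + m) = -1) ∧ stepB n ω (0 + j) ≠ -1) ↔ j = leadB n ω := by
  simp only [Nat.zero_add]
  constructor
  · rintro ⟨h1, h2⟩
    rcases lt_trichotomy j (leadB n ω) with hlt | he | hgt
    · exact absurd (stepB_of_lt_lead ω hlt) h2
    · exact he
    · exact absurd (h1 _ hgt) (stepB_lead_ne ω)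
  · rintro rfl
    exact ⟨fun m hm => stepB_of_lt_lead ω hm, stepB_lead_ne ω⟩

lemma blk_cons {n : ℕ} (b : Bool) (ω : Fin n → Bool) (j i : ℕ) :
    ((∀ m < j, stepB (n + 1) (Fin.cons b ω) (i + 1 + m) = -1) ∧
        stepB (n + 1) (Fin.cons b ω) (i + 1 + j) ≠ -1 ∧
        (i + 1 = 0 ∨ stepB (n + 1) (Fin.cons b ω) (i + 1 - 1) ≠ -1)) ↔
      (((∀ m < j, stepB n ω (i + m) = -1) ∧ stepB n ω (i + j) ≠ -1 ∧
        (i = 0 ∨ stepB n ω (i - 1) ≠ -1)) ∧ (i = 0 → b = true)) := by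
  have e1 : ∀ m, stepB (n + 1) (Fin.cons b ω) (i + 1 + m) = stepB n ω (i + m) := by
    intro m
    rw [show i + 1 + m = (i + m) + 1 by omega, stepB_cons_succ]
  have e2 : i + 1 - 1 = i := by omega
  rw [e2]
  constructor
  · rintro ⟨h1, h2, h3⟩
    refine ⟨⟨fun m hm => by rw [← e1 m]; exact h1 m hm, by rw [← e1 j]; exact h2, ?_⟩, ?_⟩
    · rcases h3 with h3 | h3
      · omega
      · cases i with
        | zero => exact Or.inl rfl
        | succ i' =>
          right
          rw [stepB_cons_succ] at h3
          simpa using h3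
    · intro hi
      subst hi
      rcases h3 with h3 | h3
      · omega
      · rw [stepB_cons_zero] at h3
        cases b
        · simp at h3
        · rfl
  · rintro ⟨⟨h1, h2, h3⟩, h4⟩
    refine ⟨fun m hm => by rw [e1 m]; exact h1 m hm, by rw [e1 j]; exact h2, Or.inr ?_⟩
    cases i with
    | zero =>
      rw [stepB_cons_zero, h4 rfl]
      decide
    | succ i' =>
      rw [stepB_cons_succ]
      rcases h3 with h3 | h3
      · omega
      · simpa using h3

lemma downBlocks_cons_true {n : ℕ} (ω : Fin n → Bool) {j : ℕ} (hj : 1 ≤ j) :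
    downBlocks (n + 1) (Fin.cons true ω) j = downBlocks n ω j := by
  rw [downBlocks_eq_sum, downBlocks_eq_sum, Finset.sum_range_succ']
  have h0 : (if (∀ m < j, stepB (n + 1) (Fin.cons true ω) (0 + m) = -1) ∧
      stepB (n + 1) (Fin.cons true ω) (0 + j) ≠ -1 ∧
      ((0:ℕ) = 0 ∨ stepB (n + 1) (Fin.cons true ω) (0 - 1) ≠ -1) then 1 else 0) = 0 := by
    rw [if_neg]
    rintro ⟨h1, -, -⟩
    have := h1 0 hj
    norm_num [stepB_cons_zero] at this
  rw [h0, add_zero]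
  apply Finset.sum_congr rfl
  intro i _
  rw [if_congr (blk_cons true ω j i) rfl rfl]
  simp

lemma downBlocks_cons_false {n : ℕ} (ω : Fin n → Bool) {j : ℕ} (hj : 1 ≤ j) :
    downBlocks (n + 1) (Fin.cons false ω) j + (if j = leadB n ω then 1 else 0) =
      downBlocks n ω j + (if j = leadB n ω + 1 then 1 else 0) := by
  rw [downBlocks_eq_sum, downBlocks_eq_sum, Finset.sum_range_succ']
  have h0 : (if (∀ m < j, stepB (n + 1) (Fin.cons false ω) (0 + m) = -1) ∧
      stepB (n + 1) (Fin.cons false ω) (0 + j) ≠ -1 ∧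
      ((0:ℕ) = 0 ∨ stepB (n + 1) (Fin.cons false ω) (0 - 1) ≠ -1) then 1 else 0) =
      (if j = leadB n ω + 1 then 1 else 0) := by
    have : ((∀ m < j, stepB (n + 1) (Fin.cons false ω) (0 + m) = -1) ∧
        stepB (n + 1) (Fin.cons false ω) (0 + j) ≠ -1 ∧
        ((0:ℕ) = 0 ∨ stepB (n + 1) (Fin.cons false ω) (0 - 1) ≠ -1)) ↔
        j = leadB n ω + 1 := by
      rw [← leadB_cons_false ω]
      constructor
      · rintro ⟨h1, h2, -⟩
        exact (blk0_iff (Fin.cons false ω) hj).mp ⟨h1, h2⟩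
      · intro he
        obtain ⟨h1, h2⟩ := (blk0_iff (Fin.cons false ω) hj).mpr he
        exact ⟨h1, h2, Or.inl rfl⟩
    rw [if_congr this rfl rfl]
  rw [h0]
  have hstep : ∀ i, (if (∀ m < j, stepB (n + 1) (Fin.cons false ω) (i + 1 + m) = -1) ∧
      stepB (n + 1) (Fin.cons false ω) (i + 1 + j) ≠ -1 ∧
      (i + 1 = 0 ∨ stepB (n + 1) (Fin.cons false ω) (i + 1 - 1) ≠ -1) then 1 else 0) =
      (if (((∀ m < j, stepB n ω (i + m) = -1) ∧ stepB n ω (i + j) ≠ -1 ∧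
        (i = 0 ∨ stepB n ω (i - 1) ≠ -1)) ∧ i ≠ 0) then 1 else 0) := by
    intro i
    refine if_congr ?_ rfl rfl
    rw [blk_cons false ω j i]
    constructor
    · rintro ⟨hp, hz⟩
      refine ⟨hp, fun hi => by simpa using hz hi⟩
    · rintro ⟨hp, hz⟩
      exact ⟨hp, fun hi => absurd hi hz⟩
  simp only [hstep]
  have hPold0 : (if j = leadB n ω then (1:ℕ) else 0) =
      (if ((∀ m < j, stepB n ω (0 + m) = -1) ∧ stepB n ω (0 + j) ≠ -1 ∧
        ((0:ℕ) = 0 ∨ stepB n ω (0 - 1) ≠ -1)) then 1 else 0) := by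
    refine (if_congr ?_ rfl rfl).symm
    constructor
    · rintro ⟨h1, h2, -⟩
      exact (blk0_iff ω hj).mp ⟨h1, h2⟩
    · intro he
      obtain ⟨h1, h2⟩ := (blk0_iff ω hj).mpr he
      exact ⟨h1, h2, Or.inl rfl⟩
  cases n with
  | zero =>
    simp only [Finset.range_zero, Finset.sum_empty]
    have hL : leadB 0 ω = 0 := by
      have := leadB_le 0 ω; omega
    rw [hL, if_neg (show ¬ j = 0 by omega)]
    omega
  | succ m =>
    rw [hPold0, Finset.sum_range_succ' (fun i => if ((∀ m' < j, stepB (m+1) ω (i + m') = -1) ∧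
        stepB (m+1) ω (i + j) ≠ -1 ∧ (i = 0 ∨ stepB (m+1) ω (i - 1) ≠ -1)) then 1 else 0) m]
    have hz : ∀ i, (if (((∀ m' < j, stepB (m+1) ω (i + 1 + m') = -1) ∧
        stepB (m+1) ω (i + 1 + j) ≠ -1 ∧ (i + 1 = 0 ∨ stepB (m+1) ω (i + 1 - 1) ≠ -1)) ∧
        i + 1 ≠ 0) then (1:ℕ) else 0) =
        (if ((∀ m' < j, stepB (m+1) ω (i + 1 + m') = -1) ∧
        stepB (m+1) ω (i + 1 + j) ≠ -1 ∧ (i + 1 = 0 ∨ stepB (m+1) ω (i + 1 - 1) ≠ -1)) then 1 else 0) := by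
      intro i
      refine if_congr ?_ rfl rfl
      simp
    rw [Finset.sum_range_succ' (fun i => if (((∀ m' < j, stepB (m+1) ω (i + m') = -1) ∧
        stepB (m+1) ω (i + j) ≠ -1 ∧ (i = 0 ∨ stepB (m+1) ω (i - 1) ≠ -1)) ∧ i ≠ 0) then 1 else 0) m]
    simp only [hz]
    rw [if_neg (by simp)]
    ring

noncomputable def Wt (z : ℕ → ℝ) (n : ℕ) (ω : Fin n → Bool) : ℝ :=
  ∏ j ∈ Finset.Icc 1 n, z j ^ downBlocks n ω j

noncomputable def Fwt (z : ℕ → ℝ) (k n : ℕ) (ω : Fin n → Bool) : ℝ :=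
  z (k + leadB n ω) * Wt z n ω / z (leadB n ω)

section

variable {z : ℕ → ℝ}

lemma zpos (hz0 : z 0 = 1) (hz : ∀ j, 1 ≤ j → 0 < z j ∧ z j ≤ 1) : ∀ k, 0 < z k := by
  intro k
  cases k with
  | zero => rw [hz0]; norm_num
  | succ m => exact (hz (m + 1) (by omega)).1

lemma Wt_pos (hz0 : z 0 = 1) (hz : ∀ j, 1 ≤ j → 0 < z j ∧ z j ≤ 1) {n : ℕ} (ω : Fin n → Bool) :
    0 < Wt z n ω :=
  Finset.prod_pos fun j _ => pow_pos (zpos hz0 hz j) _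

lemma Wt_cons_true {n : ℕ} (ω : Fin n → Bool) :
    Wt z (n + 1) (Fin.cons true ω) = Wt z n ω := by
  unfold Wt
  rw [← Finset.insert_Icc_right_eq_Icc_add_one (by omega : 1 ≤ n + 1), Finset.prod_insert (by simp)]
  rw [downBlocks_cons_true ω (by omega), downBlocks_gt ω (by omega), pow_zero, one_mul]
  exact Finset.prod_congr rfl fun j hj => by
    rw [downBlocks_cons_true ω (Finset.mem_Icc.mp hj).1]

lemma Wt_cons_false (hz0 : z 0 = 1) {n : ℕ} (ω : Fin n → Bool) :
    z (leadB n ω) * Wt z (n + 1) (Fin.cons false ω) = z (leadB n ω + 1) * Wt z n ω := by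
  set L := leadB n ω with hLdef
  have hLn : L ≤ n := leadB_le n ω
  have key : ∀ j ∈ Finset.Icc 1 (n + 1),
      z j ^ downBlocks (n + 1) (Fin.cons false ω) j * (if j = L then z j else 1) =
      z j ^ downBlocks n ω j * (if j = L + 1 then z j else 1) := by
    intro j hj
    have hj1 : 1 ≤ j := (Finset.mem_Icc.mp hj).1
    have hcount := downBlocks_cons_false ω hj1
    have e : ∀ (c : Prop) [Decidable c], (if c then z j else 1) = z j ^ (if c then 1 else 0) := by
      intro c _; split <;> simp
    rw [e, e, ← pow_add, ← pow_add, hcount]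
  have h1 := Finset.prod_congr rfl key
  rw [Finset.prod_mul_distrib, Finset.prod_mul_distrib, Finset.prod_ite_eq',
    Finset.prod_ite_eq'] at h1
  have hzL : (if L ∈ Finset.Icc 1 (n + 1) then z L else 1) = z L := by
    rcases Nat.eq_zero_or_pos L with h0 | h0
    · rw [h0, if_neg (by simp)]; exact hz0.symm
    · rw [if_pos (Finset.mem_Icc.mpr ⟨h0, by omega⟩)]
  have hzL1 : (if L + 1 ∈ Finset.Icc 1 (n + 1) then z (L + 1) else 1) = z (L + 1) := by
    rw [if_pos (by simp [Finset.mem_Icc]; omega)]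
  rw [hzL, hzL1] at h1
  have hext : ∏ j ∈ Finset.Icc 1 (n + 1), z j ^ downBlocks n ω j = Wt z n ω := by
    unfold Wt
    rw [← Finset.insert_Icc_right_eq_Icc_add_one (by omega : 1 ≤ n + 1), Finset.prod_insert (by simp),
      downBlocks_gt ω (by omega), pow_zero, one_mul]
  rw [hext] at h1
  have hdef : Wt z (n + 1) (Fin.cons false ω) =
      ∏ j ∈ Finset.Icc 1 (n + 1), z j ^ downBlocks (n + 1) (Fin.cons false ω) j := rfl
  rw [hdef]
  linarith [h1]

lemma Fwt_zero (hz0 : z 0 = 1) (hz : ∀ j, 1 ≤ j → 0 < z j ∧ z j ≤ 1) {n : ℕ} (ω : Fin n → Bool) :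
    Fwt z 0 n ω = Wt z n ω := by
  unfold Fwt
  rw [Nat.zero_add, mul_comm, mul_div_assoc, div_self (ne_of_gt (zpos hz0 hz _)), mul_one]

lemma Fwt_pos (hz0 : z 0 = 1) (hz : ∀ j, 1 ≤ j → 0 < z j ∧ z j ≤ 1) {k n : ℕ} (ω : Fin n → Bool) :
    0 < Fwt z k n ω :=
  div_pos (mul_pos (zpos hz0 hz _) (Wt_pos hz0 hz ω)) (zpos hz0 hz _)

lemma Fwt_cons_true (hz0 : z 0 = 1) {k n : ℕ} (ω : Fin n → Bool) :
    Fwt z k (n + 1) (Fin.cons true ω) = z k * Wt z n ω := by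
  unfold Fwt
  rw [leadB_cons_true, Wt_cons_true, hz0, Nat.add_zero, div_one]

lemma Fwt_cons_false (hz0 : z 0 = 1) (hz : ∀ j, 1 ≤ j → 0 < z j ∧ z j ≤ 1) {k n : ℕ}
    (ω : Fin n → Bool) :
    Fwt z k (n + 1) (Fin.cons false ω) = Fwt z (k + 1) n ω := by
  unfold Fwt
  rw [leadB_cons_false]
  have hW := Wt_cons_false hz0 (z := z) ω
  have hzL : z (leadB n ω) ≠ 0 := ne_of_gt (zpos hz0 hz _)
  have hzL1 : z (leadB n ω + 1) ≠ 0 := ne_of_gt (zpos hz0 hz _)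
  have hWn : Wt z (n + 1) (Fin.cons false ω) = z (leadB n ω + 1) * Wt z n ω / z (leadB n ω) := by
    field_simp at hW ⊢
    linarith [hW]
  rw [hWn, show k + (leadB n ω + 1) = k + 1 + leadB n ω by omega]
  field_simp

lemma Fwt_le (hz0 : z 0 = 1) (hz : ∀ j, 1 ≤ j → 0 < z j ∧ z j ≤ 1)
    (hsub : ∀ a b : ℕ, z (a + b + 1) ≤ z a * z b) {k n : ℕ} (ω : Fin n → Bool) :
    Fwt z (k + 1) n ω ≤ z k * Wt z n ω := by
  unfold Fwt
  have h := hsub k (leadB n ω)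
  have hzL : 0 < z (leadB n ω) := zpos hz0 hz _
  have hWt : 0 < Wt z n ω := Wt_pos hz0 hz ω
  rw [div_le_iff₀ hzL]
  calc z (k + 1 + leadB n ω) * Wt z n ω = z (k + leadB n ω + 1) * Wt z n ω := by ring_nf
    _ ≤ (z k * z (leadB n ω)) * Wt z n ω := by
        apply mul_le_mul_of_nonneg_right (hsub k (leadB n ω)) (le_of_lt hWt)
    _ = z k * Wt z n ω * z (leadB n ω) := by ring

end

section PT

lemma qTop_zero (K t : ℤ) {n : ℕ} (ω : Fin n → Bool) (h : ℤ) :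
    qTop K t n ω h 0 = 1 / 2 * (((K : ℝ) - t - h) / ((K : ℝ) - t)) := by
  simp [qTop, hgtB_zero]

lemma qTop_cons_succ (K t : ℤ) {n : ℕ} (b : Bool) (ω : Fin n → Bool) (h : ℤ) (i : ℕ) :
    qTop K t (n + 1) (Fin.cons b ω) h (i + 1) =
      qTop K (t + 1) n ω (h + if b then 1 else -1) i := by
  unfold qTop
  rw [hgtB_cons]
  push_cast
  ring_nf

lemma pTopProb_cons (K t : ℤ) {n : ℕ} (b : Bool) (ω : Fin n → Bool) (h : ℤ) :
    pTopProb K t (n + 1) (Fin.cons b ω) h =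
      (if b then qTop K t (n + 1) (Fin.cons b ω) h 0
        else 1 - qTop K t (n + 1) (Fin.cons b ω) h 0) *
        pTopProb K (t + 1) n ω (h + if b then 1 else -1) := by
  unfold pTopProb
  rw [Finset.prod_range_succ', mul_comm]
  congr 1
  · rw [stepB_cons_zero]
    cases b <;> norm_num
  · apply Finset.prod_congr rfl
    intro i _
    rw [stepB_cons_succ, qTop_cons_succ]

lemma adm_cons (K t : ℤ) {n : ℕ} (b : Bool) (ω : Fin n → Bool) (h : ℤ) :
    (∀ i ≤ n + 1, hgtB (n + 1) (Fin.cons b ω) h i ≤ K - t - i) ↔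
      (h ≤ K - t ∧ ∀ i ≤ n, hgtB n ω (h + if b then 1 else -1) i ≤ K - (t + 1) - i) := by
  constructor
  · intro H
    refine ⟨by simpa [hgtB_zero] using H 0 (by omega), fun i hi => ?_⟩
    have := H (i + 1) (by omega)
    rw [hgtB_cons] at this
    push_cast at this ⊢
    linarith
  · rintro ⟨h0, H⟩ i hi
    cases i with
    | zero => simpa [hgtB_zero] using h0
    | succ i' =>
      rw [hgtB_cons]
      have := H i' (by omega)
      push_cast at this ⊢
      linarith

lemma sum_pi_cons {n : ℕ} (f : (Fin (n + 1) → Bool) → ℝ) :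
    ∑ ω : Fin (n + 1) → Bool, f ω =
      (∑ ω' : Fin n → Bool, f (Fin.cons true ω')) +
        ∑ ω' : Fin n → Bool, f (Fin.cons false ω') := by
  rw [← (Fin.consEquiv (fun _ => Bool)).sum_comp f, Fintype.sum_prod_type, Fintype.sum_bool]
  rfl

end PT

lemma key_induction (z : ℕ → ℝ) (hz0 : z 0 = 1) (hz : ∀ j, 1 ≤ j → 0 < z j ∧ z j ≤ 1)
    (hsub : ∀ a b : ℕ, z (a + b + 1) ≤ z a * z b) (K : ℤ) :
    ∀ n : ℕ, ∀ t h : ℤ, ∀ k : ℕ, (n : ℤ) ≤ h → t + (n : ℤ) ≤ K →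
    ∑ ω : Fin n → Bool,
        (if ∀ i ≤ n, hgtB n ω h i ≤ K - t - (i : ℤ) then pTopProb K t n ω h else 0) *
          Fwt z k n ω ≤
      (2 : ℝ) ^ (-(n : ℤ)) * ∑ ω : Fin n → Bool, Fwt z k n ω := by
  intro n
  induction n with
  | zero =>
    intro t h k hh htK
    simp only [Nat.cast_zero, neg_zero, zpow_zero, one_mul]
    apply Finset.sum_le_sum
    intro ω _
    have hF := Fwt_pos hz0 hz (z := z) (k := k) ω
    split
    · rw [pTopProb]
      simp
    · nlinarith [hF]
  | succ n IH =>
    intro t h k hh htK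
    by_cases hK0 : h ≤ K - t
    case neg =>
      have hL : ∀ ω : Fin (n + 1) → Bool,
          (if ∀ i ≤ n + 1, hgtB (n + 1) ω h i ≤ K - t - (i : ℤ) then
            pTopProb K t (n + 1) ω h else 0) * Fwt z k (n + 1) ω = 0 := by
        intro ω
        rw [if_neg, zero_mul]
        intro H
        exact hK0 (by simpa [hgtB_zero] using H 0 (by omega))
      rw [Finset.sum_congr rfl fun ω _ => hL ω, Finset.sum_const_zero]
      have : (0:ℝ) ≤ ∑ ω : Fin (n + 1) → Bool, Fwt z k (n + 1) ω :=
        Finset.sum_nonneg fun ω _ => (Fwt_pos hz0 hz ω).le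
      positivity
    case pos =>
      set q : ℝ := 1 / 2 * (((K : ℝ) - t - h) / ((K : ℝ) - t)) with hqdef
      have hKt : (0 : ℝ) < (K : ℝ) - t := by
        have h1 : (1 : ℤ) ≤ K - t := by push_cast at htK; omega
        have h2 : (1 : ℝ) ≤ (K : ℝ) - (t : ℝ) := by exact_mod_cast h1
        linarith
      have hh0 : (0 : ℝ) ≤ (h : ℝ) := by
        have : (0 : ℤ) ≤ h := by push_cast at hh; omega
        exact_mod_cast this
      have hKh : (0 : ℝ) ≤ (K : ℝ) - t - h := by
        have h2 : (h : ℝ) ≤ (K : ℝ) - (t : ℝ) := by exact_mod_cast hK0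
        linarith
      have hq0 : 0 ≤ q := by
        rw [hqdef]
        positivity
      have hqhalf : q ≤ 1 / 2 := by
        rw [hqdef]
        have hd : ((K : ℝ) - t - h) / ((K : ℝ) - t) ≤ 1 := by
          rw [div_le_one hKt]
          linarith
        linarith
      -- decompose sums
      rw [sum_pi_cons, sum_pi_cons (f := fun ω => Fwt z k (n + 1) ω)]
      -- true branch
      have hT : ∀ ω' : Fin n → Bool,
          (if ∀ i ≤ n + 1, hgtB (n + 1) (Fin.cons true ω') h i ≤ K - t - (i : ℤ) then
            pTopProb K t (n + 1) (Fin.cons true ω') h else 0) *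
            Fwt z k (n + 1) (Fin.cons true ω') =
          q * z k * ((if ∀ i ≤ n, hgtB n ω' (h + 1) i ≤ K - (t + 1) - (i : ℤ) then
            pTopProb K (t + 1) n ω' (h + 1) else 0) * Wt z n ω') := by
        intro ω'
        rw [Fwt_cons_true hz0]
        by_cases hadm : ∀ i ≤ n, hgtB n ω' (h + 1) i ≤ K - (t + 1) - (i : ℤ)
        · rw [if_pos, if_pos hadm, pTopProb_cons, qTop_zero]
          · simp only [if_true]
            rw [hqdef]; ring
          · rw [adm_cons]
            exact ⟨hK0, by simpa using hadm⟩
        · rw [if_neg, if_neg hadm]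
          · ring
          · rw [adm_cons]
            rintro ⟨-, H⟩
            exact hadm (by simpa using H)
      -- false branch
      have hF : ∀ ω' : Fin n → Bool,
          (if ∀ i ≤ n + 1, hgtB (n + 1) (Fin.cons false ω') h i ≤ K - t - (i : ℤ) then
            pTopProb K t (n + 1) (Fin.cons false ω') h else 0) *
            Fwt z k (n + 1) (Fin.cons false ω') =
          (1 - q) * ((if ∀ i ≤ n, hgtB n ω' (h + -1) i ≤ K - (t + 1) - (i : ℤ) then
            pTopProb K (t + 1) n ω' (h + -1) else 0) * Fwt z (k + 1) n ω') := by
        intro ω'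
        rw [Fwt_cons_false hz0 hz]
        by_cases hadm : ∀ i ≤ n, hgtB n ω' (h + -1) i ≤ K - (t + 1) - (i : ℤ)
        · rw [if_pos, if_pos hadm, pTopProb_cons, qTop_zero]
          · simp only [Bool.false_eq_true, if_false]
            rw [hqdef]; ring
          · rw [adm_cons]
            exact ⟨hK0, by simpa using hadm⟩
        · rw [if_neg, if_neg hadm]
          · ring
          · rw [adm_cons]
            rintro ⟨-, H⟩
            exact hadm (by simpa using H)
      rw [Finset.sum_congr rfl fun ω' _ => hT ω', Finset.sum_congr rfl fun ω' _ => hF ω',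
        ← Finset.mul_sum, ← Finset.mul_sum]
      have hconsT : ∀ ω' : Fin n → Bool, Fwt z k (n + 1) (Fin.cons true ω') = z k * Wt z n ω' :=
        fun ω' => Fwt_cons_true hz0 ω'
      have hconsF : ∀ ω' : Fin n → Bool,
          Fwt z k (n + 1) (Fin.cons false ω') = Fwt z (k + 1) n ω' :=
        fun ω' => Fwt_cons_false hz0 hz ω'
      rw [Finset.sum_congr rfl fun ω' _ => hconsT ω',
        Finset.sum_congr rfl fun ω' _ => hconsF ω', ← Finset.mul_sum]
      set A : ℝ := ∑ ω' : Fin n → Bool, Wt z n ω' with hAdef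
      set B : ℝ := ∑ ω' : Fin n → Bool, Fwt z (k + 1) n ω' with hBdef
      have hA0 : 0 ≤ A := Finset.sum_nonneg fun ω' _ => (Wt_pos hz0 hz ω').le
      have hB0 : 0 ≤ B := Finset.sum_nonneg fun ω' _ => (Fwt_pos hz0 hz ω').le
      have hBA : B ≤ z k * A := by
        rw [hBdef, hAdef, Finset.mul_sum]
        exact Finset.sum_le_sum fun ω' _ => Fwt_le hz0 hz hsub ω'
      have hzk : 0 < z k := zpos hz0 hz k
      -- apply IH
      have hIH_T : ∑ ω' : Fin n → Bool,
          (if ∀ i ≤ n, hgtB n ω' (h + 1) i ≤ K - (t + 1) - (i : ℤ) then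
            pTopProb K (t + 1) n ω' (h + 1) else 0) * Wt z n ω' ≤
          (2 : ℝ) ^ (-(n : ℤ)) * A := by
        have := IH (t + 1) (h + 1) 0 (by push_cast at hh ⊢; omega) (by push_cast at htK ⊢; omega)
        simp only [Fwt_zero hz0 hz] at this
        exact this
      have hIH_F : ∑ ω' : Fin n → Bool,
          (if ∀ i ≤ n, hgtB n ω' (h + -1) i ≤ K - (t + 1) - (i : ℤ) then
            pTopProb K (t + 1) n ω' (h + -1) else 0) * Fwt z (k + 1) n ω' ≤
          (2 : ℝ) ^ (-(n : ℤ)) * B := by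
        exact IH (t + 1) (h + -1) (k + 1) (by push_cast at hh ⊢; omega)
          (by push_cast at htK ⊢; omega)
      set c : ℝ := (2 : ℝ) ^ (-(n : ℤ)) with hcdef
      have hc0 : 0 < c := by rw [hcdef]; positivity
      have hpow : (2 : ℝ) ^ (-((n : ℕ) + 1 : ℕ) : ℤ) = c / 2 := by
        rw [hcdef]
        rw [show (-((n : ℕ) + 1 : ℕ) : ℤ) = -(n : ℤ) + (-1) by push_cast; ring]
        rw [zpow_add₀ (by norm_num : (2:ℝ) ≠ 0)]
        norm_num [div_eq_mul_inv]
      have step1 : q * z k * (∑ ω' : Fin n → Bool,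
          (if ∀ i ≤ n, hgtB n ω' (h + 1) i ≤ K - (t + 1) - (i : ℤ) then
            pTopProb K (t + 1) n ω' (h + 1) else 0) * Wt z n ω') ≤ q * z k * (c * A) :=
        mul_le_mul_of_nonneg_left hIH_T (by positivity)
      have step2 : (1 - q) * (∑ ω' : Fin n → Bool,
          (if ∀ i ≤ n, hgtB n ω' (h + -1) i ≤ K - (t + 1) - (i : ℤ) then
            pTopProb K (t + 1) n ω' (h + -1) else 0) * Fwt z (k + 1) n ω') ≤
          (1 - q) * (c * B) :=
        mul_le_mul_of_nonneg_left hIH_F (by linarith)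
      have hfinal : q * z k * (c * A) + (1 - q) * (c * B) ≤
          (2 : ℝ) ^ (-((n : ℕ) + 1 : ℕ) : ℤ) * (z k * A + B) := by
        rw [hpow]
        nlinarith [mul_nonneg (mul_nonneg hc0.le (by linarith : (0:ℝ) ≤ 1 / 2 - q))
          (by linarith : (0:ℝ) ≤ z k * A - B)]
      calc q * z k * (∑ ω' : Fin n → Bool,
            (if ∀ i ≤ n, hgtB n ω' (h + 1) i ≤ K - (t + 1) - (i : ℤ) then
              pTopProb K (t + 1) n ω' (h + 1) else 0) * Wt z n ω') +
          (1 - q) * (∑ ω' : Fin n → Bool,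
            (if ∀ i ≤ n, hgtB n ω' (h + -1) i ≤ K - (t + 1) - (i : ℤ) then
              pTopProb K (t + 1) n ω' (h + -1) else 0) * Fwt z (k + 1) n ω') ≤
          q * z k * (c * A) + (1 - q) * (c * B) := add_le_add step1 step2
        _ ≤ (2 : ℝ) ^ (-((n : ℕ) + 1 : ℕ) : ℤ) * (z k * A + B) := hfinal
        _ = (2 : ℝ) ^ (-((n : ℕ) + 1 : ℕ) : ℤ) * (z k * A + B) := rfl

/-- Comparison of the `top` law with the simple random walk: the down-run weighted sum
over admissible paths is dominated by the simple random walk expectation. -/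
theorem top_law_dominated_by_srw (z : ℕ → ℝ) (hz0 : z 0 = 1)
    (hz : ∀ j, 1 ≤ j → 0 < z j ∧ z j ≤ 1)
    (hsub : ∀ a b : ℕ, z (a + b + 1) ≤ z a * z b)
    (K t h : ℤ) (n : ℕ) (hn : 1 ≤ n) (ht : 0 ≤ t) (htn : t + (n : ℤ) ≤ K)
    (hh2n : 2 * (n : ℤ) ≤ h) (hhK : h ≤ K - t) :
    ∑ ω ∈ Finset.univ.filter
        (fun ω : Fin n → Bool => ∀ i ≤ n, hgtB n ω h i ≤ K - t - (i : ℤ)),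
        pTopProb K t n ω h * ∏ j ∈ Finset.Icc 1 n, z j ^ downBlocks n ω j ≤
      (2 : ℝ) ^ (-(n : ℤ)) * ∑ ω : Fin n → Bool,
        ∏ j ∈ Finset.Icc 1 n, z j ^ downBlocks n ω j := by
  have hW : ∀ ω : Fin n → Bool,
      (∏ j ∈ Finset.Icc 1 n, z j ^ downBlocks n ω j) = Fwt z 0 n ω :=
    fun ω => (Fwt_zero hz0 hz ω).symm
  rw [Finset.sum_filter]
  have e1 : ∀ ω : Fin n → Bool,
      (if ∀ i ≤ n, hgtB n ω h i ≤ K - t - (i : ℤ) then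
        pTopProb K t n ω h * ∏ j ∈ Finset.Icc 1 n, z j ^ downBlocks n ω j else 0) =
      (if ∀ i ≤ n, hgtB n ω h i ≤ K - t - (i : ℤ) then pTopProb K t n ω h else 0) *
        Fwt z 0 n ω := by
    intro ω
    rw [← hW ω, ite_mul, zero_mul]
  rw [Finset.sum_congr rfl fun ω _ => e1 ω]
  have e2 : ∑ ω : Fin n → Bool, (∏ j ∈ Finset.Icc 1 n, z j ^ downBlocks n ω j) =
      ∑ ω : Fin n → Bool, Fwt z 0 n ω := Finset.sum_congr rfl fun ω _ => hW ω
  rw [e2]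
  exact key_induction z hz0 hz hsub K n t h 0 (by omega) htn
end

section
/- Fix an integer J ≥ 1 and reals z_1, …, z_J ∈ (0,1]. For ω ∈ {+1,−1}^n let U_j(ω) be the number of maximal blocks of consecutive +1's in ω of length exactly j, and define the weight W^{(J)}(ω) := ∏_{j=1}^J z_j^{U_j(ω)} (maximal blocks of +1's of length greater than J contribute the factor 1). Let a_n := 2^{−n} ∑_{ω ∈ {+1,−1}^n} W^{(J)}(ω) (with a_0 := 1). Then limsup_{n→∞} a_n^{1/n} = 1/w_c(J), where w_c(J) is the smallest positive root of φ_J(w) := 1 − (w/2)(1 + ∑_{j=1}^J (w/2)^j z_j + (w/2)^{J+1}/(1 − w/2)). -/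
lemma step_shift (n k : ℕ) (hk : k < n) (ω : Fin n → Bool) (p : ℕ) :
    stepB (n - 1 - k) (fun i => ω ⟨k + 1 + i, by have := i.isLt; omega⟩) p
      = stepB n ω (k + 1 + p) := by
  unfold stepB
  by_cases h : p < n - 1 - k
  · rw [dif_pos h, dif_pos (by omega)]
  · rw [dif_neg h, dif_neg (by omega)]

lemma upBlocks_split (n k j : ℕ) (hk : k < n) (hj : 1 ≤ j) (ω : Fin n → Bool)
    (h1 : ∀ p < k, stepB n ω p = 1) (h2 : stepB n ω k ≠ 1) :
    upBlocks n ω j = (if j = k then 1 else 0)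
      + upBlocks (n - 1 - k) (fun i => ω ⟨k + 1 + i, by have := i.isLt; omega⟩) j := by
  set m := n - 1 - k with hm
  set ω' : Fin m → Bool := fun i => ω ⟨k + 1 + i, by have := i.isLt; omega⟩ with hω'
  have hstep : ∀ p, stepB m ω' p = stepB n ω (k + 1 + p) := step_shift n k hk ω
  unfold upBlocks
  have hset : ((Finset.range n).filter fun i =>
      (∀ m' < j, stepB n ω (i + m') = 1) ∧ stepB n ω (i + j) ≠ 1 ∧
        (i = 0 ∨ stepB n ω (i - 1) ≠ 1))
      = (if j = k then {0} else ∅) ∪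
        (((Finset.range m).filter fun i =>
          (∀ m' < j, stepB m ω' (i + m') = 1) ∧ stepB m ω' (i + j) ≠ 1 ∧
            (i = 0 ∨ stepB m ω' (i - 1) ≠ 1)).image fun i => k + 1 + i) := by
    ext i
    simp only [Finset.mem_filter, Finset.mem_range, Finset.mem_union, Finset.mem_image]
    constructor
    · rintro ⟨hin, hP1, hP2, hP3⟩
      rcases lt_trichotomy i k with hik | hik | hik
      · -- i < k
        have hi0 : i = 0 := by
          rcases hP3 with h | h
          · exact h
          · exact absurd (h1 (i-1) (by omega)) h
        subst hi0
        have hjk : j = k := by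
          rcases lt_trichotomy j k with h | h | h
          · exact absurd (h1 j h) (by simpa using hP2)
          · exact h
          · exact absurd (hP1 k h) (by simpa using h2)
        left
        simp [hjk]
      · -- i = k
        exfalso
        subst hik
        rcases Nat.eq_zero_or_pos i with h0 | h0
        · exact h2 (by simpa [h0] using hP1 0 hj)
        · rcases hP3 with h | h
          · omega
          · exact h (h1 (i-1) (by omega))
      · -- i > k
        right
        refine ⟨i - (k+1), ⟨⟨by omega, ?_, ?_, ?_⟩, by omega⟩⟩
        · intro m' hm'
          rw [hstep]
          have : k + 1 + (i - (k+1) + m') = i + m' := by omega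
          rw [this]; exact hP1 m' hm'
        · rw [hstep]
          have : k + 1 + (i - (k+1) + j) = i + j := by omega
          rw [this]; exact hP2
        · rcases Nat.eq_zero_or_pos (i - (k+1)) with h0 | h0
          · exact Or.inl h0
          · right
            rw [hstep]
            have : k + 1 + (i - (k+1) - 1) = i - 1 := by omega
            rw [this]
            rcases hP3 with h | h
            · omega
            · exact h
    · rintro (h | ⟨i', ⟨⟨hi'm, hQ1, hQ2, hQ3⟩, rfl⟩⟩)
      · by_cases hjk : j = k
        · rw [if_pos hjk, Finset.mem_singleton] at h
          subst h
          refine ⟨by omega, ?_, by simpa [hjk] using h2, Or.inl rfl⟩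
          intro m' hm'
          simpa using h1 m' (by omega)
        · simp [hjk] at h
      · refine ⟨by omega, ?_, ?_, ?_⟩
        · intro m' hm'
          have := hQ1 m' hm'
          rw [hstep] at this
          have e : k + 1 + (i' + m') = k + 1 + i' + m' := by omega
          rwa [e] at this
        · have := hQ2
          rw [hstep] at this
          have e : k + 1 + (i' + j) = k + 1 + i' + j := by omega
          rwa [e] at this
        · right
          rcases Nat.eq_zero_or_pos i' with h0 | h0
          · have : k + 1 + i' - 1 = k := by omega
            rw [this]; exact h2
          · have := hQ3
            rcases this with h | h
            · omega
            · rw [hstep] at h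
              have e : k + 1 + (i' - 1) = k + 1 + i' - 1 := by omega
              rwa [e] at h
  rw [hset, Finset.card_union_of_disjoint, Finset.card_image_of_injective _ (fun a b h => by omega)]
  · congr 1
    split <;> simp
  · rw [Finset.disjoint_left]
    intro x hx hx'
    simp only [Finset.mem_image, Finset.mem_filter] at hx'
    obtain ⟨i', _, rfl⟩ := hx'
    split at hx
    · rw [Finset.mem_singleton] at hx; omega
    · simp at hx


lemma exists_step_ne (n : ℕ) (ω : Fin n → Bool) : ∃ p, stepB n ω p ≠ 1 :=
  ⟨n, by simp [stepB]⟩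

def ff (n : ℕ) (ω : Fin n → Bool) : ℕ := Nat.find (exists_step_ne n ω)

lemma ff_le (n : ℕ) (ω : Fin n → Bool) : ff n ω ≤ n :=
  Nat.find_le (by simp [stepB])

lemma ff_spec (n : ℕ) (ω : Fin n → Bool) : stepB n ω (ff n ω) ≠ 1 :=
  Nat.find_spec (exists_step_ne n ω)

lemma ff_min (n : ℕ) (ω : Fin n → Bool) {p : ℕ} (hp : p < ff n ω) : stepB n ω p = 1 :=
  not_not.mp (Nat.find_min (exists_step_ne n ω) hp)

lemma upBlocks_const_true (n j : ℕ) (hj : 1 ≤ j) :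
    upBlocks n (fun _ => true) j = if j = n then 1 else 0 := by
  have hstep : ∀ p, stepB n (fun _ : Fin n => true) p = if p < n then 1 else 0 := by
    intro p; unfold stepB; split <;> simp
  unfold upBlocks
  have hset : ((Finset.range n).filter fun i =>
      (∀ m < j, stepB n (fun _ => true) (i + m) = 1) ∧
        stepB n (fun _ => true) (i + j) ≠ 1 ∧
        (i = 0 ∨ stepB n (fun _ => true) (i - 1) ≠ 1)) = if j = n then {0} else ∅ := by
    ext i
    simp only [Finset.mem_filter, Finset.mem_range, hstep]
    constructor
    · rintro ⟨hin, hP1, hP2, hP3⟩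
      have hi0 : i = 0 := by
        rcases hP3 with h | h
        · exact h
        · exfalso; exact h (by rw [if_pos (by omega)])
      subst hi0
      have hjn : j = n := by
        by_contra hne
        rcases lt_or_gt_of_ne hne with h | h
        · exact hP2 (by rw [if_pos (by omega)])
        · have := hP1 n (by omega)
          rw [if_neg (by omega)] at this
          exact absurd this (by norm_num)
      rw [if_pos hjn]; exact Finset.mem_singleton_self 0
    · intro h
      by_cases hjn : j = n
      · rw [if_pos hjn, Finset.mem_singleton] at h
        subst h
        refine ⟨by omega, ?_, ?_, Or.inl rfl⟩
        · intro m hm; rw [if_pos (by omega)]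
        · rw [if_neg (by omega)]; norm_num
      · rw [if_neg hjn] at h; exact absurd h (Finset.notMem_empty i)
  rw [hset]
  split <;> simp

noncomputable def wtF (J : ℕ) (z : ℕ → ℝ) (k : ℕ) : ℝ := if k ∈ Finset.Icc 1 J then z k else 1

noncomputable def BB (J : ℕ) (z : ℕ → ℝ) (n : ℕ) : ℝ :=
  ∑ ω : Fin n → Bool, ∏ j ∈ Finset.Icc 1 J, z j ^ upBlocks n ω j

lemma BB_rec (J : ℕ) (z : ℕ → ℝ) (n : ℕ) :
    BB J z n = wtF J z n + ∑ k ∈ Finset.range n, wtF J z k * BB J z (n - 1 - k) := by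
  classical
  have hmap : ∀ ω : Fin n → Bool, ω ∈ Finset.univ → ff n ω ∈ Finset.range (n + 1) := by
    intro ω _; simp [Nat.lt_succ_iff, ff_le]
  rw [BB, ← Finset.sum_fiberwise_of_maps_to hmap, Finset.sum_range_succ]
  -- the k = n fiber
  have hfib_n : (Finset.univ.filter fun ω : Fin n → Bool => ff n ω = n)
      = {fun _ => true} := by
    ext ω
    simp only [Finset.mem_filter, Finset.mem_univ, true_and, Finset.mem_singleton]
    constructor
    · intro h
      funext p
      have := ff_min n ω (p := p) (by rw [h]; exact p.isLt)
      unfold stepB at this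
      rw [dif_pos p.isLt] at this
      by_contra hb
      simp only [Bool.not_eq_true] at hb
      rw [Fin.eta, hb] at this
      norm_num at this
    · rintro rfl
      refine le_antisymm (ff_le n _) (le_of_not_gt fun h => ?_)
      have := ff_spec n (fun _ => true)
      unfold stepB at this
      rw [dif_pos h] at this
      simp at this
  have hconst : ∏ j ∈ Finset.Icc 1 J, z j ^ upBlocks n (fun _ => true) j = wtF J z n := by
    have : ∀ j ∈ Finset.Icc 1 J, z j ^ upBlocks n (fun _ => true) j
        = if j = n then z j else 1 := by
      intro j hj
      rw [upBlocks_const_true n j (Finset.mem_Icc.mp hj).1]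
      split <;> simp
    rw [Finset.prod_congr rfl this, Finset.prod_ite_eq' (Finset.Icc 1 J) n z, wtF]
  rw [hfib_n, Finset.sum_singleton, hconst, add_comm]
  congr 1
  refine Finset.sum_congr rfl fun k hk => ?_
  rw [Finset.mem_range] at hk
  -- the k < n fiber
  have key : ∀ ω ∈ Finset.univ.filter fun ω : Fin n → Bool => ff n ω = k,
      ∏ j ∈ Finset.Icc 1 J, z j ^ upBlocks n ω j
        = wtF J z k * ∏ j ∈ Finset.Icc 1 J,
            z j ^ upBlocks (n - 1 - k) (fun i => ω ⟨k + 1 + i, by have := i.isLt; omega⟩) j := by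
    intro ω hω
    rw [Finset.mem_filter] at hω
    have h1 : ∀ p < k, stepB n ω p = 1 := fun p hp => ff_min n ω (hω.2 ▸ hp)
    have h2 : stepB n ω k ≠ 1 := hω.2 ▸ ff_spec n ω
    have hsp : ∀ j ∈ Finset.Icc 1 J, z j ^ upBlocks n ω j
        = (if j = k then z j else 1) *
          z j ^ upBlocks (n - 1 - k) (fun i => ω ⟨k + 1 + i, by have := i.isLt; omega⟩) j := by
      intro j hj
      rw [upBlocks_split n k j hk (Finset.mem_Icc.mp hj).1 ω h1 h2, pow_add]
      congr 1
      split <;> simp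
    rw [Finset.prod_congr rfl hsp, Finset.prod_mul_distrib,
      Finset.prod_ite_eq' (Finset.Icc 1 J) k z]
    rfl
  rw [Finset.sum_congr rfl key, ← Finset.mul_sum, BB]
  congr 1
  -- bijection between the fiber and all of Fin (n-1-k) → Bool
  refine Finset.sum_nbij' (i := fun ω => fun p : Fin (n - 1 - k) => ω ⟨k + 1 + p, by have := p.isLt; omega⟩)
    (j := fun ω' => fun p : Fin n => if h : k + 1 ≤ (p : ℕ) then ω' ⟨(p : ℕ) - (k + 1), by have := p.isLt; omega⟩
      else decide ((p : ℕ) < k)) ?_ ?_ ?_ ?_ ?_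
  · intro ω hω; exact Finset.mem_univ _
  · intro ω' _
    simp only [Finset.mem_filter, Finset.mem_univ, true_and]
    set ω₀ : Fin n → Bool := fun p => if h : k + 1 ≤ (p : ℕ) then
        ω' ⟨(p : ℕ) - (k + 1), by have := p.isLt; omega⟩ else decide ((p : ℕ) < k) with hω₀
    have hk1 : stepB n ω₀ k ≠ 1 := by
      unfold stepB
      rw [dif_pos hk]
      have hv : ω₀ ⟨k, hk⟩ = false := by
        rw [hω₀]
        simp only [Fin.val_mk]
        rw [dif_neg (by omega)]
        simp
      rw [hv]; norm_num
    have hk2 : ∀ p < k, stepB n ω₀ p = 1 := by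
      intro p hp
      unfold stepB
      rw [dif_pos (by omega : p < n)]
      have hv : ω₀ ⟨p, by omega⟩ = true := by
        rw [hω₀]
        simp only [Fin.val_mk]
        rw [dif_neg (by omega)]
        simp [hp]
      rw [hv]; norm_num
    exact le_antisymm (Nat.find_le hk1) (le_of_not_gt fun h => ff_spec n ω₀ (hk2 _ h))
  · intro ω hω
    rw [Finset.mem_filter] at hω
    have h1 : ∀ p < k, stepB n ω p = 1 := fun p hp => ff_min n ω (hω.2 ▸ hp)
    have h2 : stepB n ω k ≠ 1 := hω.2 ▸ ff_spec n ω
    have hvt : ∀ p : Fin n, (p : ℕ) < k → ω p = true := by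
      intro p hp
      have h := h1 p hp
      unfold stepB at h
      rw [dif_pos p.isLt, Fin.eta] at h
      by_contra hb
      simp only [Bool.not_eq_true] at hb
      rw [hb] at h; norm_num at h
    have hvf : ∀ p : Fin n, (p : ℕ) = k → ω p = false := by
      intro p hp
      have h := h2
      unfold stepB at h
      rw [dif_pos hk] at h
      rw [show (⟨k, hk⟩ : Fin n) = p from Fin.ext hp.symm] at h
      by_contra hb
      simp only [Bool.not_eq_false] at hb
      rw [hb] at h; norm_num at h
    funext p
    by_cases hp : k + 1 ≤ (p : ℕ)
    · simp only [dif_pos hp]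
      congr 1
      exact Fin.ext (by simp only [Fin.val_mk]; omega)
    · simp only [dif_neg hp]
      by_cases hpk : (p : ℕ) < k
      · rw [hvt p hpk]; simp [hpk]
      · rw [hvf p (by omega)]; simp [hpk]
  · intro ω' _
    funext p
    simp only []
    rw [dif_pos (by omega : k + 1 ≤ k + 1 + (p : ℕ))]
    congr 1
    ext
    simp
  · intro ω hω; rfl

/-- The limsup of the `n`-th roots of the simple-random-walk expectations of the
up-run weights equals `1/w_c(J)`. -/
theorem limsup_weighted_srw_eq_inv_wc (J : ℕ) (hJ : 1 ≤ J) (z : ℕ → ℝ)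
    (hz : ∀ j ∈ Finset.Icc 1 J, 0 < z j ∧ z j ≤ 1)
    (a : ℕ → ℝ)
    (ha : ∀ n, a n = (2 : ℝ) ^ (-(n : ℤ)) *
      ∑ ω : Fin n → Bool, ∏ j ∈ Finset.Icc 1 J, z j ^ upBlocks n ω j)
    (wc : ℝ)
    (hwc : IsLeast {w : ℝ | 0 < w ∧
      1 - w / 2 * (1 + ∑ j ∈ Finset.Icc 1 J, (w / 2) ^ j * z j
        + (w / 2) ^ (J + 1) / (1 - w / 2)) = 0} wc) :
    Filter.limsup (fun n : ℕ => a n ^ ((n : ℝ)⁻¹)) Filter.atTop = 1 / wc := by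
  classical
  obtain ⟨hmem, hwcLB⟩ := hwc
  obtain ⟨hwc0, hwcE⟩ := hmem
  have hz0 : ∀ j ∈ Finset.Icc 1 J, 0 ≤ z j := fun j hj => (hz j hj).1.le
  -- Step 1 : wc < 2, via the intermediate value theorem
  have hwc2 : wc < 2 := by
    set t : ℝ := 1 / (2 * ((J : ℝ) + 2)) with ht
    have hJ0 : (0 : ℝ) ≤ (J : ℝ) := Nat.cast_nonneg J
    have ht0 : 0 < t := by rw [ht]; positivity
    have ht2 : t ≤ 1 / 2 := by
      rw [ht, div_le_div_iff₀ (by positivity) (by norm_num)]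
      nlinarith
    set c : ℝ := 2 - 2 * t with hc
    have hc0 : (0 : ℝ) ≤ c := by rw [hc]; linarith
    set g : ℝ → ℝ := fun w => 1 - w / 2 * (1 + ∑ j ∈ Finset.Icc 1 J, (w / 2) ^ j * z j
        + (w / 2) ^ (J + 1) / (1 - w / 2)) with hg
    have hg0 : g 0 = 1 := by simp only [hg]; norm_num
    have hden : ∀ w ∈ Set.Icc (0 : ℝ) c, (1 : ℝ) - w / 2 ≠ 0 := by
      intro w hw
      rw [Set.mem_Icc] at hw
      have : w ≤ c := hw.2
      have : w / 2 ≤ 1 - t := by rw [hc] at this; linarith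
      exact ne_of_gt (by linarith)
    have hgc : ContinuousOn g (Set.Icc 0 c) := by
      have c1 : Continuous fun w : ℝ => ∑ j ∈ Finset.Icc 1 J, (w / 2) ^ j * z j :=
        continuous_finset_sum _ fun j _ => ((continuous_id.div_const 2).pow j).mul continuous_const
      have c2 : Continuous fun w : ℝ => (w / 2) ^ (J + 1) := (continuous_id.div_const 2).pow (J + 1)
      have c3 : Continuous fun w : ℝ => 1 - w / 2 := continuous_const.sub (continuous_id.div_const 2)
      rw [hg]
      apply ContinuousOn.sub continuousOn_const
      apply ContinuousOn.mul (continuous_id.div_const 2).continuousOn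
      apply ContinuousOn.add (continuousOn_const.add c1.continuousOn)
      exact ContinuousOn.div c2.continuousOn c3.continuousOn hden
    have hgcle : g c ≤ 0 := by
      have hce : c / 2 = 1 - t := by rw [hc]; ring
      have hu0 : (0 : ℝ) ≤ c / 2 := by linarith
      have hS : 0 ≤ ∑ j ∈ Finset.Icc 1 J, (c / 2) ^ j * z j :=
        Finset.sum_nonneg fun j hj => mul_nonneg (pow_nonneg hu0 j) (hz0 j hj)
      -- Bernoulli : (1 - t)^(J+2) ≥ 1 - (J+2) t = 1/2 ≥ t
      have hBern : 1 - ((J : ℝ) + 2) * t ≤ (1 - t) ^ (J + 2) := by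
        have := one_add_mul_le_pow (a := -t) (by linarith) (J + 2)
        push_cast at this
        calc 1 - ((J : ℝ) + 2) * t = 1 + ((J : ℝ) + 2) * (-t) := by ring
          _ ≤ (1 + -t) ^ (J + 2) := this
          _ = (1 - t) ^ (J + 2) := by ring_nf
      have hhalf : ((J : ℝ) + 2) * t = 1 / 2 := by
        rw [ht]; field_simp
      have htle : t ≤ (c / 2) ^ (J + 2) := by
        rw [hce]
        calc t ≤ 1 / 2 := ht2
          _ = 1 - ((J : ℝ) + 2) * t := by rw [hhalf]; ring
          _ ≤ (1 - t) ^ (J + 2) := hBern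
      have hT : 1 ≤ (c / 2) * ((c / 2) ^ (J + 1) / (1 - c / 2)) := by
        have hden' : (1 : ℝ) - c / 2 = t := by rw [hce]; ring
        rw [hden']
        rw [mul_div_assoc']
        rw [one_le_div ht0]
        calc t ≤ (c / 2) ^ (J + 2) := htle
          _ = c / 2 * (c / 2) ^ (J + 1) := by rw [← pow_succ']
      simp only [hg]
      nlinarith [mul_nonneg hu0 hS]
    have h0mem : (0 : ℝ) ∈ Set.Icc (g c) (g 0) := by
      rw [hg0]; exact ⟨hgcle, by norm_num⟩
    obtain ⟨x, hx, hgx⟩ := intermediate_value_Icc' hc0 hgc h0mem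
    have hx0 : x ≠ 0 := by
      rintro rfl
      rw [hg0] at hgx
      norm_num at hgx
    have hxpos : 0 < x := lt_of_le_of_ne hx.1 (Ne.symm hx0)
    have hxroot : x ∈ {w : ℝ | 0 < w ∧
        1 - w / 2 * (1 + ∑ j ∈ Finset.Icc 1 J, (w / 2) ^ j * z j
          + (w / 2) ^ (J + 1) / (1 - w / 2)) = 0} := by
      refine ⟨hxpos, ?_⟩
      simp only [hg] at hgx
      exact hgx
    have hwcx : wc ≤ x := hwcLB hxroot
    have : c < 2 := by rw [hc]; linarith
    linarith [hx.2]
  -- Step 2 : the root identity for q = wc/2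
  set q : ℝ := wc / 2 with hqdef
  have hq0 : 0 < q := by rw [hqdef]; positivity
  have hq1 : q < 1 := by rw [hqdef]; linarith
  have h1q : (0 : ℝ) < 1 - q := by linarith
  have hE : q * (1 + ∑ j ∈ Finset.Icc 1 J, q ^ j * z j + q ^ (J + 1) / (1 - q)) = 1 := by
    linarith [hwcE]
  -- Step 3 : partial sums of the renewal kernel
  have hSall : ∀ n, J + 1 ≤ n →
      ∑ k ∈ Finset.range n, wtF J z k * q ^ (k + 1) = 1 - q ^ (n + 1) / (1 - q) := by
    have hSJ : ∑ k ∈ Finset.range (J + 1), wtF J z k * q ^ (k + 1)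
        = 1 - q ^ (J + 2) / (1 - q) := by
      have hr : Finset.range (J + 1) = insert 0 (Finset.Icc 1 J) := by
        ext x; simp only [Finset.mem_range, Finset.mem_insert, Finset.mem_Icc]; omega
      rw [hr, Finset.sum_insert (by simp)]
      have h0 : wtF J z 0 * q ^ (0 + 1) = q := by
        rw [wtF, if_neg (by simp)]; ring
      have hterm : ∀ k ∈ Finset.Icc 1 J, wtF J z k * q ^ (k + 1) = q * (q ^ k * z k) := by
        intro k hk; rw [wtF, if_pos hk]; ring
      rw [h0, Finset.sum_congr rfl hterm, ← Finset.mul_sum]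
      rw [mul_add, mul_add] at hE
      have hq2 : q * (q ^ (J + 1) / (1 - q)) = q ^ (J + 2) / (1 - q) := by
        field_simp; ring
      rw [hq2] at hE
      linarith [hE]
    intro n hn
    induction n, hn using Nat.le_induction with
    | base => simpa using hSJ
    | succ n hn ih =>
      rw [Finset.sum_range_succ, ih]
      have hwtn : wtF J z n = 1 := by
        rw [wtF, if_neg (by simp only [Finset.mem_Icc]; omega)]
      rw [hwtn, one_mul]
      have hqn : (0:ℝ) < q ^ (n + 1) := pow_pos hq0 _
      field_simp
      ring
  -- Step 4 : positivity and basic bounds for BB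
  have hBBpos : ∀ n, 0 < BB J z n := fun n =>
    Finset.sum_pos (fun ω _ => Finset.prod_pos fun j hj => pow_pos (hz j hj).1 _)
      Finset.univ_nonempty
  have hBBle : ∀ n, BB J z n ≤ 2 ^ n := by
    intro n
    have h1 : ∀ ω : Fin n → Bool, ∏ j ∈ Finset.Icc 1 J, z j ^ upBlocks n ω j ≤ 1 :=
      fun ω => Finset.prod_le_one (fun j hj => pow_nonneg (hz j hj).1.le _)
        (fun j hj => pow_le_one₀ (hz j hj).1.le (hz j hj).2)
    calc BB J z n ≤ ∑ _ω : Fin n → Bool, (1 : ℝ) := Finset.sum_le_sum fun ω _ => h1 ω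
      _ = (Fintype.card (Fin n → Bool) : ℝ) := by
          rw [Finset.sum_const, Finset.card_univ, nsmul_eq_mul, mul_one]
      _ = 2 ^ n := by
          rw [Fintype.card_fun, Fintype.card_bool, Fintype.card_fin]; push_cast; ring
  have hwt1 : ∀ k, wtF J z k ≤ 1 := by
    intro k; rw [wtF]; split
    · exact (hz _ ‹_›).2
    · exact le_refl 1
  have hwt0 : ∀ k, 0 ≤ wtF J z k := by
    intro k; rw [wtF]; split
    · exact (hz _ ‹_›).1.le
    · norm_num
  have hIccne : (Finset.Icc 1 J).Nonempty := ⟨1, by simp [Finset.mem_Icc, hJ]⟩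
  set m0 : ℝ := min ((Finset.Icc 1 J).inf' hIccne z) 1 with hm0def
  have hm0pos : 0 < m0 :=
    lt_min ((Finset.lt_inf'_iff _).mpr fun j hj => (hz j hj).1) one_pos
  have hm0le : ∀ k, m0 ≤ wtF J z k := by
    intro k; rw [wtF]; split
    · exact le_trans (min_le_left _ _) (Finset.inf'_le z ‹_›)
    · exact min_le_right _ _
  -- Step 5 : the renewal recursion for v n = BB n * q^n
  have hvrec : ∀ n, BB J z n * q ^ n = wtF J z n * q ^ n
      + ∑ k ∈ Finset.range n, wtF J z k * q ^ (k + 1) * (BB J z (n - 1 - k) * q ^ (n - 1 - k)) := by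
    intro n
    rw [BB_rec J z n, add_mul, Finset.sum_mul]
    congr 1
    refine Finset.sum_congr rfl fun k hk => ?_
    rw [Finset.mem_range] at hk
    have hp : q ^ n = q ^ (k + 1) * q ^ (n - 1 - k) := by
      rw [← pow_add]; congr 1; omega
    rw [hp]; ring
  -- Step 6 : upper bound
  set C : ℝ := max ((2 : ℝ) ^ J) ((1 - q) / q) with hCdef
  have hCpos : 0 < C := lt_of_lt_of_le (by positivity) (le_max_left _ _)
  have hub : ∀ n, BB J z n * q ^ n ≤ C := by
    intro n
    induction n using Nat.strong_induction_on with
    | _ n ih =>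
      by_cases hn : n ≤ J
      · calc BB J z n * q ^ n ≤ 2 ^ n * q ^ n :=
              mul_le_mul_of_nonneg_right (hBBle n) (pow_nonneg hq0.le n)
          _ = (2 * q) ^ n := by rw [mul_pow]
          _ = wc ^ n := by rw [show 2 * q = wc by rw [hqdef]; ring]
          _ ≤ 2 ^ n := pow_le_pow_left₀ hwc0.le (by linarith) n
          _ ≤ 2 ^ J := pow_le_pow_right₀ (by norm_num) hn
          _ ≤ C := le_max_left _ _
      · push_neg at hn
        have hn' : J + 1 ≤ n := hn
        rw [hvrec n]
        have hsum : ∑ k ∈ Finset.range n, wtF J z k * q ^ (k + 1) * (BB J z (n - 1 - k) * q ^ (n - 1 - k))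
            ≤ ∑ k ∈ Finset.range n, wtF J z k * q ^ (k + 1) * C := by
          refine Finset.sum_le_sum fun k hk => ?_
          refine mul_le_mul_of_nonneg_left (ih (n - 1 - k) ?_) ?_
          · rw [Finset.mem_range] at hk; omega
          · exact mul_nonneg (hwt0 k) (pow_nonneg hq0.le _)
        have h2 : ∑ k ∈ Finset.range n, wtF J z k * q ^ (k + 1) * C
            = C * (1 - q ^ (n + 1) / (1 - q)) := by
          rw [← Finset.sum_mul, hSall n hn', mul_comm]
        have h1 : wtF J z n * q ^ n ≤ q ^ n :=
          le_trans (mul_le_mul_of_nonneg_right (hwt1 n) (pow_nonneg hq0.le n)) (by rw [one_mul])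
        have h3 : q ^ n ≤ C * (q ^ (n + 1) / (1 - q)) := by
          have he : (1 - q) / q * (q ^ (n + 1) / (1 - q)) = q ^ n := by
            field_simp; ring
          rw [← he]
          exact mul_le_mul_of_nonneg_right (le_max_right _ _)
            (div_pos (pow_pos hq0 _) h1q).le
        rw [h2] at hsum
        have hexp : C * (1 - q ^ (n + 1) / (1 - q)) = C - C * (q ^ (n + 1) / (1 - q)) := by ring
        linarith
  -- Step 7 : lower bound
  have hrne : (Finset.range (J + 1)).Nonempty := ⟨0, by simp⟩
  set c0 : ℝ := min ((Finset.range (J + 1)).inf' hrne (fun n => BB J z n * q ^ n))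
    (m0 * (1 - q) / q) with hc0def
  have hc0pos : 0 < c0 := by
    apply lt_min
    · exact (Finset.lt_inf'_iff _).mpr fun n _ => mul_pos (hBBpos n) (pow_pos hq0 n)
    · positivity
  have hlb : ∀ n, c0 ≤ BB J z n * q ^ n := by
    intro n
    induction n using Nat.strong_induction_on with
    | _ n ih =>
      by_cases hn : n ≤ J
      · exact le_trans (min_le_left _ _)
          (Finset.inf'_le _ (by simp only [Finset.mem_range]; omega))
      · push_neg at hn
        have hn' : J + 1 ≤ n := hn
        rw [hvrec n]
        have hsum : ∑ k ∈ Finset.range n, wtF J z k * q ^ (k + 1) * c0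
            ≤ ∑ k ∈ Finset.range n, wtF J z k * q ^ (k + 1) * (BB J z (n - 1 - k) * q ^ (n - 1 - k)) := by
          refine Finset.sum_le_sum fun k hk => ?_
          refine mul_le_mul_of_nonneg_left (ih (n - 1 - k) ?_) ?_
          · rw [Finset.mem_range] at hk; omega
          · exact mul_nonneg (hwt0 k) (pow_nonneg hq0.le _)
        have h2 : ∑ k ∈ Finset.range n, wtF J z k * q ^ (k + 1) * c0
            = c0 * (1 - q ^ (n + 1) / (1 - q)) := by
          rw [← Finset.sum_mul, hSall n hn', mul_comm]
        have h1 : m0 * q ^ n ≤ wtF J z n * q ^ n :=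
          mul_le_mul_of_nonneg_right (hm0le n) (pow_nonneg hq0.le n)
        have h3 : c0 * (q ^ (n + 1) / (1 - q)) ≤ m0 * q ^ n := by
          have he : m0 * (1 - q) / q * (q ^ (n + 1) / (1 - q)) = m0 * q ^ n := by
            field_simp; ring
          rw [← he]
          exact mul_le_mul_of_nonneg_right (min_le_right _ _)
            (div_pos (pow_pos hq0 _) h1q).le
        rw [h2] at hsum
        have hexp : c0 * (1 - q ^ (n + 1) / (1 - q)) = c0 - c0 * (q ^ (n + 1) / (1 - q)) := by ring
        linarith
  -- Step 8 : a n = (BB n * q^n) / wc^n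
  have hav : ∀ n, a n = (BB J z n * q ^ n) / wc ^ n := by
    intro n
    have hBBeq : (∑ ω : Fin n → Bool, ∏ j ∈ Finset.Icc 1 J, z j ^ upBlocks n ω j) = BB J z n := rfl
    rw [ha n, hBBeq, zpow_neg, zpow_natCast]
    have hwne : (wc : ℝ) ^ n ≠ 0 := pow_ne_zero n (ne_of_gt hwc0)
    have h2n : ((2 : ℝ) ^ n) ≠ 0 := by positivity
    rw [hqdef, div_pow]
    field_simp
  have hA1 : ∀ n, c0 / wc ^ n ≤ a n := by
    intro n
    rw [hav n]
    gcongr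
    exact hlb n
  have hA2 : ∀ n, a n ≤ C / wc ^ n := by
    intro n
    rw [hav n]
    gcongr
    exact hub n
  -- Step 9 : the limit
  have hnroot : ∀ d : ℝ, 0 < d →
      Filter.Tendsto (fun n : ℕ => d ^ ((n : ℝ)⁻¹)) Filter.atTop (nhds 1) := by
    intro d hd
    have heq : (fun n : ℕ => d ^ ((n : ℝ)⁻¹))
        = fun n : ℕ => Real.exp (Real.log d * ((n : ℝ))⁻¹) := by
      funext n; rw [Real.rpow_def_of_pos hd]
    rw [heq]
    have h1 : Filter.Tendsto (fun n : ℕ => ((n : ℝ))⁻¹) Filter.atTop (nhds 0) :=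
      tendsto_inv_atTop_zero.comp tendsto_natCast_atTop_atTop
    have h2 : Filter.Tendsto (fun n : ℕ => Real.log d * ((n : ℝ))⁻¹) Filter.atTop (nhds 0) := by
      simpa using h1.const_mul (Real.log d)
    have h3 := (Real.continuous_exp.tendsto 0).comp h2
    simpa [Function.comp_def] using h3
  have hmain : Filter.Tendsto (fun n : ℕ => a n ^ ((n : ℝ)⁻¹)) Filter.atTop (nhds (1 / wc)) := by
    have hlow := (hnroot c0 hc0pos).div_const wc
    have hhigh := (hnroot C hCpos).div_const wc
    refine tendsto_of_tendsto_of_tendsto_of_le_of_le' hlow hhigh ?_ ?_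
    · filter_upwards [Filter.eventually_ge_atTop 1] with n hn
      have hne : ((n : ℝ)) ≠ 0 := Nat.cast_ne_zero.mpr (by omega)
      have hpow : ((wc ^ n : ℝ)) ^ ((n : ℝ)⁻¹) = wc := by
        rw [← Real.rpow_natCast wc n, ← Real.rpow_mul hwc0.le,
          mul_inv_cancel₀ hne, Real.rpow_one]
      have hb : 0 ≤ c0 / wc ^ n := (div_pos hc0pos (pow_pos hwc0 n)).le
      have := Real.rpow_le_rpow hb (hA1 n) (inv_nonneg.mpr (Nat.cast_nonneg n))
      rwa [Real.div_rpow hc0pos.le (pow_nonneg hwc0.le n), hpow] at this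
    · filter_upwards [Filter.eventually_ge_atTop 1] with n hn
      have hne : ((n : ℝ)) ≠ 0 := Nat.cast_ne_zero.mpr (by omega)
      have hpow : ((wc ^ n : ℝ)) ^ ((n : ℝ)⁻¹) = wc := by
        rw [← Real.rpow_natCast wc n, ← Real.rpow_mul hwc0.le,
          mul_inv_cancel₀ hne, Real.rpow_one]
      have ha0 : 0 ≤ a n := le_trans (div_pos hc0pos (pow_pos hwc0 n)).le (hA1 n)
      have := Real.rpow_le_rpow ha0 (hA2 n) (inv_nonneg.mpr (Nat.cast_nonneg n))
      rwa [Real.div_rpow hCpos.le (pow_nonneg hwc0.le n), hpow] at this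
  exact hmain.limsup_eq
end
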